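/- arXiv:2504.20573 — 4 statements merged into one kernel-verified Lean document; each statement's English description precedes it below -/
import Mathlib

section
/- Let F be a minor-closed family of graphs in which every graph is d-degenerate. Then every graph in F is odd (2d+1)-colorable. -/
open SimpleGraph Finset
open scoped Classical

section Defs

variable {V : Type*}

/-- Degree of a vertex (classical, no decidability assumptions). -/
noncomputable def gdeg [Fintype V] (G : SimpleGraph V) (v : V) : ℕ :=
  (Finset.univ.filter fun u => G.Adj v u).card

/-- Number of neighbors of `v` receiving color `c` under `φ`. -/
noncomputable def colorCount [Fintype V] (G : SimpleGraph V) {α : Type*} (φ : V → α)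
    (v : V) (c : α) : ℕ :=
  (Finset.univ.filter fun u => G.Adj v u ∧ φ u = c).card

/-- `φ` is a proper coloring of `G`. -/
def ProperColoring (G : SimpleGraph V) {α : Type*} (φ : V → α) : Prop :=
  ∀ u w, G.Adj u w → φ u ≠ φ w

/-- Vertex `v` satisfies the odd condition w.r.t. `φ`. -/
def OddAt [Fintype V] (G : SimpleGraph V) {α : Type*} (φ : V → α) (v : V) : Prop :=
  ∃ c, Odd (colorCount G φ v c)

/-- `φ` is an odd `m`-coloring of `G`. -/
def IsOddColoring [Fintype V] (G : SimpleGraph V) (m : ℕ) (φ : V → Fin m) : Prop :=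
  ProperColoring G φ ∧ ∀ v : V, (∃ u, G.Adj v u) → OddAt G φ v

/-- `G` is odd `m`-colorable. -/
def OddColorable [Fintype V] (G : SimpleGraph V) (m : ℕ) : Prop :=
  ∃ φ : V → Fin m, IsOddColoring G m φ

/-- The identity ordering of `Fin n` is an addition ordering of `G` as a `k`-tree:
the first `k+1` vertices form a clique and every later vertex's earlier neighborhood
is a clique of order `k`. -/
def IsAdditionOrdering {n : ℕ} (k : ℕ) (G : SimpleGraph (Fin n)) : Prop :=
  (∀ i j : Fin n, i.val < k + 1 → j.val < k + 1 → i ≠ j → G.Adj i j) ∧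
  ∀ i : Fin n, k + 1 ≤ i.val →
    G.IsNClique k (Finset.univ.filter fun j => j < i ∧ G.Adj i j)

/-- `G` is a `k`-tree. -/
def IsKTree (k : ℕ) [Fintype V] (G : SimpleGraph V) : Prop :=
  k + 1 ≤ Fintype.card V ∧
  ∃ e : V ≃ Fin (Fintype.card V),
    IsAdditionOrdering k (SimpleGraph.comap (fun j => e.symm j) G)

/-- The graph obtained from `G` by deleting the vertices in `S`
(the vertices of `S` are kept but become isolated). -/
def GraphDel (G : SimpleGraph V) (S : Set V) : SimpleGraph V where
  Adj x y := G.Adj x y ∧ x ∉ S ∧ y ∉ S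
  symm := ⟨fun x y h => ⟨h.1.symm, h.2.2, h.2.1⟩⟩
  loopless := ⟨fun x h => G.loopless.irrefl x h.1⟩

end Defs
section Defs
variable {V : Type*}

/-- `H` is a minor of `G`, via disjoint connected branch sets. -/
def IsMinorOf {W : Type*} (H : SimpleGraph W) (G : SimpleGraph V) : Prop :=
  ∃ f : W → Set V,
    (∀ w, (f w).Nonempty) ∧
    (∀ w, (G.induce (f w)).Connected) ∧
    (Pairwise fun w w' => Disjoint (f w) (f w')) ∧
    (∀ ⦃w w'⦄, H.Adj w w' → ∃ a ∈ f w, ∃ b ∈ f w', G.Adj a b)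

/-- `G` is `d`-degenerate: every nonempty (induced) subgraph has a vertex of degree at most `d`. -/
def DegenerateLE (G : SimpleGraph V) (d : ℕ) : Prop :=
  ∀ s : Finset V, s.Nonempty → ∃ v ∈ s, (s.filter fun u => G.Adj v u).card ≤ d

/-- `G` is outerplanar iff it has no `K₄` minor and no `K_{2,3}` minor. -/
def Outerplanar (G : SimpleGraph V) : Prop :=
  ¬ IsMinorOf (completeGraph (Fin 4)) G ∧
  ¬ IsMinorOf (completeBipartiteGraph (Fin 2) (Fin 3)) G

/-- `G` has tree-width at most `k`, via tree decompositions. -/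
def TreewidthAtMost [Fintype V] (G : SimpleGraph V) (k : ℕ) : Prop :=
  ∃ (n : ℕ) (T : SimpleGraph (Fin n)) (X : Fin n → Finset V),
    T.IsTree ∧
    (∀ v : V, ∃ i, v ∈ X i) ∧
    (∀ u v : V, G.Adj u v → ∃ i, u ∈ X i ∧ v ∈ X i) ∧
    (∀ v : V, (T.induce {i | v ∈ X i}).Connected) ∧
    (∀ i, (X i).card ≤ k + 1)

/-- The root clique `V_i` of the branch at `v_i`: earlier neighbors of `v_i`. -/
noncomputable def rootClique {n : ℕ} (G : SimpleGraph (Fin n)) (i : Fin n) : Finset (Fin n) :=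
  Finset.univ.filter fun j => j < i ∧ G.Adj i j

/-- Vertices of the branch `B(V_i, v_i)` outside the root clique: vertices reachable
from `v_i` by walks avoiding `V_i`. -/
def branchSet {n : ℕ} (G : SimpleGraph (Fin n)) (i : Fin n) : Set (Fin n) :=
  {x | x ∉ rootClique G i ∧ ∃ p : G.Walk i x, ∀ y ∈ p.support, y ∉ rootClique G i}
end Defs


lemma connected_induce_singleton {V : Type*} (G : SimpleGraph V) (a : V) :
    (G.induce {a}).Connected := by
  rw [SimpleGraph.connected_iff]
  refine ⟨fun x y => ?_, ⟨⟨a, rfl⟩⟩⟩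
  have hx : (x : V) = a := x.2
  have hy : (y : V) = a := y.2
  have : x = y := Subtype.ext (hx.trans hy.symm)
  exact this ▸ SimpleGraph.Reachable.refl x

lemma connected_induce_pair {V : Type*} {G : SimpleGraph V} {a b : V} (h : G.Adj a b) :
    (G.induce {a, b}).Connected := by
  rw [SimpleGraph.connected_iff]
  have hab : (G.induce ({a, b} : Set V)).Adj ⟨a, by simp⟩ ⟨b, by simp⟩ := h
  refine ⟨fun x y => ?_, ⟨⟨a, by simp⟩⟩⟩
  have key : ∀ z : ({a, b} : Set V), (G.induce {a, b}).Reachable ⟨a, by simp⟩ z := by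
    rintro ⟨z, hz | hz⟩
    · subst hz; exact SimpleGraph.Reachable.refl _
    · subst hz; exact hab.reachable
  exact (key x).symm.trans (key y)

lemma minor_of_injective {V W : Type*} {G : SimpleGraph V} {H : SimpleGraph W}
    (ι : W → V) (hinj : Function.Injective ι)
    (hadj : ∀ w w', H.Adj w w' → G.Adj (ι w) (ι w')) : IsMinorOf H G := by
  refine ⟨fun w => {ι w}, fun w => ⟨ι w, rfl⟩, fun w => connected_induce_singleton G (ι w),
    fun w w' hne => Set.disjoint_singleton.2 (fun hc => hne (hinj hc)), ?_⟩
  intro w w' h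
  exact ⟨ι w, rfl, ι w', rfl, hadj _ _ h⟩

lemma colorCount_card {V : Type*} [Fintype V] (G : SimpleGraph V) {α : Type*} (φ : V → α)
    (v : V) (c : α) (p : V → Prop) [DecidablePred p]
    (hp : ∀ u, (G.Adj v u ∧ φ u = c) ↔ p u) :
    colorCount G φ v c = (Finset.univ.filter p).card := by
  unfold colorCount
  exact congrArg Finset.card (Finset.filter_congr (fun x _ => hp x))

/-- If `F` is a minor-closed family of graphs in which every graph is
`d`-degenerate, then every graph in `F` is odd `(2d+1)`-colorable. -/
theorem minor_closed_degenerate_odd_colorable (d : ℕ)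
    (F : ∀ n : ℕ, SimpleGraph (Fin n) → Prop)
    (hminor : ∀ (n m : ℕ) (G : SimpleGraph (Fin n)) (H : SimpleGraph (Fin m)),
      F n G → IsMinorOf H G → F m H)
    (hdeg : ∀ (n : ℕ) (G : SimpleGraph (Fin n)), F n G → DegenerateLE G d) :
    ∀ (n : ℕ) (G : SimpleGraph (Fin n)), F n G → OddColorable G (2 * d + 1) := by
  intro n
  induction n using Nat.strong_induction_on with
  | _ n IH =>
    match n, IH with
    | 0, _ =>
      intro G _
      exact ⟨Fin.elim0, fun a => a.elim0, fun a => a.elim0⟩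
    | (m+1), IH =>
      intro G hG
      obtain ⟨v, -, hvdeg⟩ := hdeg _ G hG Finset.univ ⟨0, Finset.mem_univ 0⟩
      set e := finSuccEquiv' v with he
      set ι : Fin m → Fin (m+1) := fun k => e.symm (some k) with hι
      have hιe : ∀ k, e (ι k) = some k := fun k => e.apply_symm_apply _
      have hιv : ∀ k, ι k ≠ v := by
        intro k hc
        have h1 : e (ι k) = some k := hιe k
        rw [hc, he, finSuccEquiv'_at] at h1
        exact Option.some_ne_none k h1.symm
      have hι_inj : Function.Injective ι := fun a b h => by
        have h2 := congrArg e h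
        rw [hιe, hιe] at h2
        exact Option.some.inj h2
      have hsurj : ∀ j : Fin (m+1), j ≠ v → ∃ k, ι k = j := by
        intro j hj
        have hnone : e v = none := by rw [he]; exact finSuccEquiv'_at v
        cases hej : e j with
        | none =>
          exact absurd (e.injective (hej.trans hnone.symm)) hj
        | some k =>
          refine ⟨k, ?_⟩
          have h3 := e.symm_apply_apply j
          rw [hej] at h3
          exact h3
      by_cases hnbr : ∃ u, G.Adj v u
      case neg =>
        set G' : SimpleGraph (Fin m) := SimpleGraph.comap ι G with hG'def
        have hmin : IsMinorOf G' G := minor_of_injective ι hι_inj (fun w w' h => h)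
        obtain ⟨φ', hp', ho'⟩ := IH m (Nat.lt_succ_self m) G' (hminor _ _ _ _ hG hmin)
        have hne : ∀ {a b : Fin (m+1)}, G.Adj a b → a ≠ v := fun {a b} h hc =>
          hnbr ⟨b, hc ▸ h⟩
        refine ⟨fun j => (e j).elim 0 φ', ?_, ?_⟩
        · intro a b hab
          obtain ⟨k, rfl⟩ := hsurj a (hne hab)
          obtain ⟨s, rfl⟩ := hsurj b (hne hab.symm)
          have hadj : G'.Adj k s := hab
          simpa [hιe] using hp' k s hadj
        · intro w hw
          obtain ⟨t, hwt⟩ := hw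
          obtain ⟨k, rfl⟩ := hsurj w (hne hwt)
          obtain ⟨s, rfl⟩ := hsurj t (hne hwt.symm)
          have hcnt : ∀ c, colorCount G' φ' k c
              = colorCount G (fun j => (e j).elim 0 φ') (ι k) c := by
            intro c
            unfold colorCount
            apply Finset.card_bij (fun s _ => ι s)
            · intro a ha
              simp only [Finset.mem_filter, Finset.mem_univ, true_and] at ha ⊢
              exact ⟨ha.1, by simp [hιe, ha.2]⟩
            · intro a _ b _ h; exact hι_inj h
            · intro b hb
              simp only [Finset.mem_filter, Finset.mem_univ, true_and] at hb
              obtain ⟨s, rfl⟩ := hsurj b (hne hb.1.symm)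
              refine ⟨s, ?_, rfl⟩
              simp only [Finset.mem_filter, Finset.mem_univ, true_and]
              refine ⟨hb.1, ?_⟩
              have := hb.2
              simpa [hιe] using this
          obtain ⟨c, hc⟩ := ho' k ⟨s, show G'.Adj k s from hwt⟩
          exact ⟨c, (hcnt c) ▸ hc⟩
      case pos =>
        obtain ⟨u, hvu⟩ := hnbr
        have huv : u ≠ v := fun hc => G.loopless.irrefl v (hc ▸ hvu)
        obtain ⟨zu, hzu⟩ := hsurj u huv
        set G' : SimpleGraph (Fin m) :=
          { Adj := fun k s => k ≠ s ∧ (G.Adj (ι k) (ι s) ∨ (ι k = u ∧ G.Adj v (ι s)) ∨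
              (ι s = u ∧ G.Adj v (ι k)))
            symm := by
              refine ⟨?_⟩
              rintro k s ⟨h1, h2⟩
              refine ⟨h1.symm, ?_⟩
              rcases h2 with h | ⟨h3, h4⟩ | ⟨h3, h4⟩
              · exact Or.inl h.symm
              · exact Or.inr (Or.inr ⟨h3, h4⟩)
              · exact Or.inr (Or.inl ⟨h3, h4⟩)
            loopless := ⟨fun k h => h.1 rfl⟩ } with hG'def
        have hG'adj : ∀ k s, G'.Adj k s ↔ (k ≠ s ∧ (G.Adj (ι k) (ι s) ∨
            (ι k = u ∧ G.Adj v (ι s)) ∨ (ι s = u ∧ G.Adj v (ι k)))) := fun k s => Iff.rfl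
        have hmin : IsMinorOf G' G := by
          set f : Fin m → Set (Fin (m+1)) := fun k => if ι k = u then {u, v} else {ι k} with hf
          have hmem : ∀ k x, x ∈ f k ↔ (x = ι k ∨ (ι k = u ∧ x = v)) := by
            intro k x
            by_cases h : ι k = u <;> simp [hf, h, Set.mem_insert_iff] <;> tauto
          refine ⟨f, ?_, ?_, ?_, ?_⟩
          · intro k; exact ⟨ι k, (hmem k _).2 (Or.inl rfl)⟩
          · intro k
            by_cases h : ι k = u
            · have hfk : f k = {u, v} := by rw [hf]; simp [h]
              rw [hfk]
              exact connected_induce_pair hvu.symm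
            · have hfk : f k = {ι k} := by rw [hf]; simp [h]
              rw [hfk]
              exact connected_induce_singleton G (ι k)
          · intro k s hks
            rw [Set.disjoint_left]
            intro x hxk hxs
            rcases (hmem k x).1 hxk with h1 | ⟨h1, h1'⟩ <;>
              rcases (hmem s x).1 hxs with h2 | ⟨h2, h2'⟩
            · exact hks (hι_inj (h1.symm.trans h2 : ι k = ι s))
            · exact hιv k ((h1.symm.trans h2').symm ▸ rfl)
            · exact hιv s ((h2.symm.trans h1').symm ▸ rfl)
            · exact hks (hι_inj (h1.trans h2.symm))
          · intro k s hks
            obtain ⟨hne, hcase⟩ := (hG'adj k s).1 hks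
            rcases hcase with h | ⟨h1, h2⟩ | ⟨h1, h2⟩
            · exact ⟨ι k, (hmem k _).2 (Or.inl rfl), ι s, (hmem s _).2 (Or.inl rfl), h⟩
            · exact ⟨v, (hmem k _).2 (Or.inr ⟨h1, rfl⟩), ι s, (hmem s _).2 (Or.inl rfl), h2⟩
            · exact ⟨ι k, (hmem k _).2 (Or.inl rfl), v, (hmem s _).2 (Or.inr ⟨h1, rfl⟩), h2.symm⟩
        obtain ⟨φ', hp', ho'⟩ := IH m (Nat.lt_succ_self m) G' (hminor _ _ _ _ hG hmin)
        set φraw : Fin (m+1) → Fin (2*d+1) := fun j => (e j).elim 0 φ' with hφraw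
        have hφι : ∀ k, φraw (ι k) = φ' k := fun k => by simp [hφraw, hιe]
        set N : Finset (Fin (m+1)) := Finset.univ.filter (fun t => G.Adj v t) with hN
        have hNcard : N.card ≤ d := hvdeg
        set mcount : Fin (m+1) → Fin (2*d+1) → ℕ :=
          fun w c => (Finset.univ.filter fun t => G.Adj w t ∧ t ≠ v ∧ φraw t = c).card with hmc
        set forb : Fin (m+1) → Fin (2*d+1) :=
          fun w => if h : ∃ c, Odd (mcount w c) then h.choose else 0 with hforb
        set S : Finset (Fin (2*d+1)) := N.image φraw ∪ N.image forb with hS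
        obtain ⟨x, hx⟩ : ∃ x : Fin (2*d+1), x ∉ S := by
          by_contra hc
          push_neg at hc
          have hsub : (Finset.univ : Finset (Fin (2*d+1))) ⊆ S := fun y _ => hc y
          have h1 : 2*d+1 ≤ S.card := by
            simpa using Finset.card_le_card hsub
          have h2 : S.card ≤ 2*d := by
            calc S.card ≤ (N.image φraw).card + (N.image forb).card :=
                  Finset.card_union_le _ _
              _ ≤ N.card + N.card := add_le_add Finset.card_image_le Finset.card_image_le
              _ ≤ d + d := add_le_add hNcard hNcard
              _ = 2*d := by ring
          omega
        set φ : Fin (m+1) → Fin (2*d+1) := Function.update φraw v x with hφ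
        have hφv : φ v = x := Function.update_self v x φraw
        have hφne : ∀ j : Fin (m+1), j ≠ v → φ j = φraw j := fun j h =>
          Function.update_of_ne h x φraw
        have hx1 : ∀ t, G.Adj v t → x ≠ φraw t := by
          intro t ht hc
          exact hx (Finset.mem_union_left _ (Finset.mem_image.2
            ⟨t, Finset.mem_filter.2 ⟨Finset.mem_univ t, ht⟩, hc.symm⟩))
        have hx2 : ∀ t, G.Adj v t → x ≠ forb t := by
          intro t ht hc
          exact hx (Finset.mem_union_right _ (Finset.mem_image.2
            ⟨t, Finset.mem_filter.2 ⟨Finset.mem_univ t, ht⟩, hc.symm⟩))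
        -- count splitting for neighbours of v
        have hsplit : ∀ w, G.Adj w v → ∀ c,
            colorCount G φ w c = mcount w c + (if x = c then 1 else 0) := by
          intro w hwv c
          rw [colorCount_card G φ w c (fun t => G.Adj w t ∧ φ t = c) (fun t => Iff.rfl)]
          by_cases hxc : x = c
          · rw [if_pos hxc]
            have hset : (Finset.univ.filter fun t => G.Adj w t ∧ φ t = c)
                = insert v (Finset.univ.filter fun t => G.Adj w t ∧ t ≠ v ∧ φraw t = c) := by
              ext t
              simp only [Finset.mem_filter, Finset.mem_univ, true_and, Finset.mem_insert]
              constructor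
              · rintro ⟨hadj, hcol⟩
                by_cases htv : t = v
                · exact Or.inl htv
                · exact Or.inr ⟨hadj, htv, (hφne t htv).symm.trans hcol⟩
              · rintro (rfl | ⟨hadj, htv, hcol⟩)
                · exact ⟨hwv, hφv.trans hxc⟩
                · exact ⟨hadj, (hφne t htv).trans hcol⟩
            rw [hset, Finset.card_insert_of_notMem (by simp)]
          · rw [if_neg hxc]
            have hset : (Finset.univ.filter fun t => G.Adj w t ∧ φ t = c)
                = (Finset.univ.filter fun t => G.Adj w t ∧ t ≠ v ∧ φraw t = c) := by
              ext t
              simp only [Finset.mem_filter, Finset.mem_univ, true_and]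
              constructor
              · rintro ⟨hadj, hcol⟩
                have htv : t ≠ v := by
                  rintro rfl
                  exact hxc (hφv.symm.trans hcol)
                exact ⟨hadj, htv, (hφne t htv).symm.trans hcol⟩
              · rintro ⟨hadj, htv, hcol⟩
                exact ⟨hadj, (hφne t htv).trans hcol⟩
            rw [hset]
            exact (Nat.add_zero _).symm
        -- odd condition at neighbours of v
        have hoddN : ∀ w, G.Adj v w → OddAt G φ w := by
          intro w hvw
          have hwv : G.Adj w v := hvw.symm
          by_cases h : ∃ c, Odd (mcount w c)
          · refine ⟨h.choose, ?_⟩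
            rw [hsplit w hwv h.choose]
            have hfw : forb w = h.choose := by
              simp only [hforb]
              rw [dif_pos h]
            have hxne : x ≠ h.choose := hfw ▸ hx2 w hvw
            rw [if_neg hxne, Nat.add_zero]
            exact h.choose_spec
          · push_neg at h
            refine ⟨x, ?_⟩
            rw [hsplit w hwv x, if_pos rfl]
            have hev := h x
            rw [Nat.odd_iff] at hev ⊢
            omega
        -- odd condition at v
        have hvodd : OddAt G φ v := by
          refine ⟨φraw u, ?_⟩
          have hset : (Finset.univ.filter fun t => G.Adj v t ∧ φ t = φraw u) = {u} := by
            ext t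
            simp only [Finset.mem_filter, Finset.mem_univ, true_and, Finset.mem_singleton]
            constructor
            · rintro ⟨hadj, hcol⟩
              by_contra htu
              have htv : t ≠ v := fun hc => G.loopless.irrefl v (hc ▸ hadj)
              obtain ⟨s, rfl⟩ := hsurj t htv
              have hszu : zu ≠ s := fun hc => htu (by rw [← hc, hzu])
              have hadj' : G'.Adj zu s := (hG'adj zu s).2 ⟨hszu, Or.inr (Or.inl ⟨hzu, hadj⟩)⟩
              have hne' := hp' zu s hadj'
              have h1 : φ (ι s) = φ' s := (hφne _ (hιv s)).trans (hφι s)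
              have h2 : φraw u = φ' zu := by rw [← hzu, hφι]
              exact hne' (h2.symm.trans (hcol.symm.trans h1))
            · intro ht
              rw [ht]
              exact ⟨hvu, hφne u huv⟩
          rw [colorCount_card G φ v (φraw u) (fun t => G.Adj v t ∧ φ t = φraw u)
            (fun t => Iff.rfl), hset, Finset.card_singleton]
          exact odd_one
        -- count transfer for non-neighbours
        have htrans : ∀ k, ¬ G.Adj (ι k) v → ∀ c,
            colorCount G' φ' k c = colorCount G φ (ι k) c := by
          intro k hknv c
          unfold colorCount
          apply Finset.card_bij (fun s _ => ι s)
          · intro s hs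
            simp only [Finset.mem_filter, Finset.mem_univ, true_and] at hs ⊢
            obtain ⟨hadj', hcol⟩ := hs
            obtain ⟨hne', hcase⟩ := (hG'adj k s).1 hadj'
            have hadj : G.Adj (ι k) (ι s) := by
              rcases hcase with h | ⟨h1, h2⟩ | ⟨h1, h2⟩
              · exact h
              · exact absurd (h1 ▸ hvu.symm : G.Adj (ι k) v) hknv
              · exact absurd h2.symm hknv
            exact ⟨hadj, (hφne _ (hιv s)).trans ((hφι s).trans hcol)⟩
          · intro a _ b _ h; exact hι_inj h
          · intro t ht
            simp only [Finset.mem_filter, Finset.mem_univ, true_and] at ht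
            obtain ⟨hadj, hcol⟩ := ht
            have htv : t ≠ v := fun hc => hknv (hc ▸ hadj)
            obtain ⟨s, rfl⟩ := hsurj t htv
            refine ⟨s, ?_, rfl⟩
            simp only [Finset.mem_filter, Finset.mem_univ, true_and]
            refine ⟨(hG'adj k s).2 ⟨fun hc => G.loopless.irrefl _ (hc ▸ hadj), Or.inl hadj⟩, ?_⟩
            have hps : φ (ι s) = φ' s := (hφne _ (hιv s)).trans (hφι s)
            rw [← hps]
            exact hcol
        refine ⟨φ, ?_, ?_⟩
        · intro a b hab
          by_cases ha : a = v
          · rw [ha] at hab ⊢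
            rw [hφv, hφne b (fun hc => G.loopless.irrefl v (hc ▸ hab))]
            exact hx1 b hab
          · by_cases hb : b = v
            · rw [hb] at hab ⊢
              rw [hφv, hφne a ha]
              exact fun hc => hx1 a hab.symm hc.symm
            · obtain ⟨k, rfl⟩ := hsurj a ha
              obtain ⟨s, rfl⟩ := hsurj b hb
              have hadj' : G'.Adj k s := (hG'adj k s).2
                ⟨fun hc => G.loopless.irrefl _ (hc ▸ hab), Or.inl hab⟩
              rw [hφne _ ha, hφne _ hb, hφι, hφι]
              exact hp' k s hadj'
        · intro w hw
          by_cases hwv : w = v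
          · subst hwv; exact hvodd
          · by_cases hadjv : G.Adj v w
            · exact hoddN w hadjv
            · obtain ⟨k, rfl⟩ := hsurj w hwv
              obtain ⟨t, hwt⟩ := hw
              have htv : t ≠ v := fun hc => hadjv (hc ▸ hwt).symm
              obtain ⟨s, rfl⟩ := hsurj t htv
              have hG's : G'.Adj k s := (hG'adj k s).2
                ⟨fun hc => G.loopless.irrefl _ (hc ▸ hwt), Or.inl hwt⟩
              obtain ⟨c, hc⟩ := ho' k ⟨s, hG's⟩
              exact ⟨c, (htrans k (fun h => hadjv h.symm) c) ▸ hc⟩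
end

section
/- For every positive integer k, every graph of tree-width at most k is odd (2k+1)-colorable; in particular, every k-tree is odd (2k+1)-colorable. -/
open SimpleGraph Finset
open scoped Classical

section Core

private lemma exists_notmem_of_card_lt {n : ℕ} (F : Finset (Fin n)) (h : F.card < n) :
    ∃ c, c ∉ F := by
  by_contra hc
  push_neg at hc
  have hsub : (univ : Finset (Fin n)) ⊆ F := fun c _ => hc c
  have := Finset.card_le_card hsub
  simp only [card_univ, Fintype.card_fin] at this
  omega

lemma core_odd {V : Type} [Fintype V] (k : ℕ) (G : SimpleGraph V) (ι : V → ℕ)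
    (hι : Function.Injective ι) (K : V → Finset V)
    (hK1 : ∀ v, (K v).card ≤ k)
    (hK2 : ∀ v, ∀ j ∈ K v, ι j < ι v)
    (hK3 : ∀ v j, ι j < ι v → G.Adj v j → j ∈ K v)
    (hK4 : ∀ v, ∀ j ∈ K v, ∀ j' ∈ K v, ι j' < ι j → j' ∈ K j) :
    OddColorable G (2 * k + 1) := by
  classical
  have key : ∀ m : ℕ, ∃ φ : V → Fin (2 * k + 1),
      (∀ i, ι i < m → ∀ j ∈ K i, φ i ≠ φ j) ∧
      (∀ v, ι v < m → (∃ u, ι u < m ∧ G.Adj v u) →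
        ∃ c, Odd ((univ.filter fun u => ι u < m ∧ G.Adj v u ∧ φ u = c)).card) := by
    intro m
    induction m with
    | zero =>
      exact ⟨fun _ => ⟨0, by omega⟩, fun i hi => by omega, fun v hv => by omega⟩
    | succ m ih =>
      obtain ⟨φ, hprop, hodd⟩ := ih
      by_cases hex : ∃ v₀ : V, ι v₀ = m
      · obtain ⟨v₀, hv₀⟩ := hex
        set Nb : Finset V := univ.filter (fun u => ι u < m ∧ G.Adj v₀ u) with hNbdef
        have hNbK : Nb ⊆ K v₀ := by
          intro u hu
          simp only [hNbdef, mem_filter, mem_univ, true_and] at hu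
          exact hK3 v₀ u (by omega) hu.2
        set g : V → Fin (2 * k + 1) := fun u =>
          if h : ∃ c, Odd ((univ.filter fun w => ι w < m ∧ G.Adj u w ∧ φ w = c)).card
          then h.choose else φ u with hgdef
        set F : Finset (Fin (2 * k + 1)) := (K v₀).image φ ∪ Nb.image g with hFdef
        have hFcard : F.card < 2 * k + 1 := by
          have h1 : ((K v₀).image φ).card ≤ k :=
            le_trans Finset.card_image_le (hK1 v₀)
          have h2 : (Nb.image g).card ≤ k :=
            le_trans Finset.card_image_le (le_trans (Finset.card_le_card hNbK) (hK1 v₀))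
          have h3 : F.card ≤ ((K v₀).image φ).card + (Nb.image g).card := by
            rw [hFdef]; exact Finset.card_union_le _ _
          omega
        obtain ⟨c₀, hc₀⟩ := exists_notmem_of_card_lt F hFcard
        have hc₀K : ∀ j ∈ K v₀, φ j ≠ c₀ := by
          intro j hj h
          exact hc₀ (Finset.mem_union_left _ (h ▸ Finset.mem_image_of_mem φ hj))
        have hc₀g : ∀ u ∈ Nb, g u ≠ c₀ := by
          intro u hu h
          exact hc₀ (Finset.mem_union_right _ (h ▸ Finset.mem_image_of_mem g hu))
        refine ⟨Function.update φ v₀ c₀, ?_, ?_⟩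
        · intro i hi j hj
          have hji : ι j < ι i := hK2 i j hj
          have hjv : j ≠ v₀ := fun h => by subst h; omega
          by_cases hiv : i = v₀
          · subst hiv
            rw [Function.update_self, Function.update_of_ne hjv]
            exact fun h => hc₀K j hj h.symm
          · have him : ι i < m := lt_of_le_of_ne (Nat.lt_succ_iff.mp hi)
              (fun h => hiv (hι (h.trans hv₀.symm)))
            rw [Function.update_of_ne hiv, Function.update_of_ne hjv]
            exact hprop i him j hj
        · intro v hv hne
          obtain ⟨u, hul, hua⟩ := hne
          by_cases hvv : v = v₀
          · subst hvv
            have huv : u ≠ v := fun h => G.loopless.irrefl v (h ▸ hua)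
            have hum : ι u < m := lt_of_le_of_ne (Nat.lt_succ_iff.mp hul)
              (fun h => huv (hι (h.trans hv₀.symm)))
            have huNb : u ∈ Nb := by simp [hNbdef, hum, hua]
            refine ⟨φ u, ?_⟩
            have hsingle : (univ.filter fun w =>
                ι w < m + 1 ∧ G.Adj v w ∧ Function.update φ v c₀ w = φ u) = {u} := by
              ext w
              simp only [mem_filter, mem_univ, true_and, mem_singleton]
              constructor
              · rintro ⟨h1, h2, h3⟩
                have hwv : w ≠ v := fun h => G.loopless.irrefl v (h ▸ h2)
                rw [Function.update_of_ne hwv] at h3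
                have h1' : ι w < m := lt_of_le_of_ne (Nat.lt_succ_iff.mp h1)
                  (fun h => hwv (hι (h.trans hv₀.symm)))
                by_contra hwu
                have hwK : w ∈ K v := hNbK (by simp [hNbdef, h1', h2])
                have huK : u ∈ K v := hNbK huNb
                have hne' : ι w ≠ ι u := fun h => hwu (hι h)
                rcases lt_or_gt_of_ne hne' with hlt | hlt
                · exact hprop u hum w (hK4 v u huK w hwK hlt) h3.symm
                · exact hprop w h1' u (hK4 v w hwK u huK hlt) h3
              · rintro rfl
                exact ⟨by omega, hua, by rw [Function.update_of_ne huv]⟩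
            rw [hsingle, Finset.card_singleton]
            exact odd_one
          · have hvm : ι v < m := lt_of_le_of_ne (Nat.lt_succ_iff.mp hv)
              (fun h => hvv (hι (h.trans hv₀.symm)))
            by_cases hadj : G.Adj v v₀
            · by_cases hiso : ∃ w, ι w < m ∧ G.Adj v w
              · have hg : ∃ c, Odd ((univ.filter fun w =>
                    ι w < m ∧ G.Adj v w ∧ φ w = c)).card := hodd v hvm hiso
                have hgv : g v = hg.choose := by simp [hgdef, dif_pos hg]
                have hgodd : Odd ((univ.filter fun w =>
                    ι w < m ∧ G.Adj v w ∧ φ w = g v)).card := by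
                  rw [hgv]; exact hg.choose_spec
                have hvNb : v ∈ Nb := by simp [hNbdef, hvm, hadj.symm]
                have hgne : g v ≠ c₀ := hc₀g v hvNb
                refine ⟨g v, ?_⟩
                have hseteq : (univ.filter fun w =>
                    ι w < m + 1 ∧ G.Adj v w ∧ Function.update φ v₀ c₀ w = g v) =
                    (univ.filter fun w => ι w < m ∧ G.Adj v w ∧ φ w = g v) := by
                  ext w
                  simp only [mem_filter, mem_univ, true_and]
                  constructor
                  · rintro ⟨h1, h2, h3⟩
                    have hwv : w ≠ v₀ := by
                      intro h; subst h
                      rw [Function.update_self] at h3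
                      exact hgne h3.symm
                    rw [Function.update_of_ne hwv] at h3
                    exact ⟨lt_of_le_of_ne (Nat.lt_succ_iff.mp h1)
                      (fun h => hwv (hι (h.trans hv₀.symm))), h2, h3⟩
                  · rintro ⟨h1, h2, h3⟩
                    have hwv : w ≠ v₀ := fun h => by subst h; omega
                    exact ⟨by omega, h2, by rw [Function.update_of_ne hwv]; exact h3⟩
                rw [hseteq]
                exact hgodd
              · refine ⟨c₀, ?_⟩
                have hsingle : (univ.filter fun w =>
                    ι w < m + 1 ∧ G.Adj v w ∧ Function.update φ v₀ c₀ w = c₀) = {v₀} := by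
                  ext w
                  simp only [mem_filter, mem_univ, true_and, mem_singleton]
                  constructor
                  · rintro ⟨h1, h2, h3⟩
                    by_contra hwv
                    have h1' : ι w < m := lt_of_le_of_ne (Nat.lt_succ_iff.mp h1)
                      (fun h => hwv (hι (h.trans hv₀.symm)))
                    exact hiso ⟨w, h1', h2⟩
                  · rintro rfl
                    exact ⟨by omega, hadj, Function.update_self _ _ _⟩
                rw [hsingle, Finset.card_singleton]
                exact odd_one
            · have huv : u ≠ v₀ := fun h => hadj (h ▸ hua)
              have hum : ι u < m := lt_of_le_of_ne (Nat.lt_succ_iff.mp hul)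
                (fun h => huv (hι (h.trans hv₀.symm)))
              obtain ⟨c, hc⟩ := hodd v hvm ⟨u, hum, hua⟩
              refine ⟨c, ?_⟩
              have hseteq : (univ.filter fun w =>
                  ι w < m + 1 ∧ G.Adj v w ∧ Function.update φ v₀ c₀ w = c) =
                  (univ.filter fun w => ι w < m ∧ G.Adj v w ∧ φ w = c) := by
                ext w
                simp only [mem_filter, mem_univ, true_and]
                constructor
                · rintro ⟨h1, h2, h3⟩
                  have hwv : w ≠ v₀ := fun h => hadj (h ▸ h2)
                  rw [Function.update_of_ne hwv] at h3
                  exact ⟨lt_of_le_of_ne (Nat.lt_succ_iff.mp h1)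
                    (fun h => hwv (hι (h.trans hv₀.symm))), h2, h3⟩
                · rintro ⟨h1, h2, h3⟩
                  have hwv : w ≠ v₀ := fun h => by subst h; omega
                  exact ⟨by omega, h2, by rw [Function.update_of_ne hwv]; exact h3⟩
              rw [hseteq]
              exact hc
      · refine ⟨φ, ?_, ?_⟩
        · intro i hi j hj
          have him : ι i < m := lt_of_le_of_ne (Nat.lt_succ_iff.mp hi)
            (fun h => hex ⟨i, h⟩)
          exact hprop i him j hj
        · intro v hv hne
          have hlt : ∀ u : V, ι u < m + 1 ↔ ι u < m := fun u =>
            ⟨fun h => lt_of_le_of_ne (Nat.lt_succ_iff.mp h) (fun h' => hex ⟨u, h'⟩),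
             fun h => by omega⟩
          obtain ⟨u, hul, hua⟩ := hne
          obtain ⟨c, hc⟩ := hodd v ((hlt v).mp hv) ⟨u, (hlt u).mp hul, hua⟩
          refine ⟨c, ?_⟩
          have : (univ.filter fun u => ι u < m + 1 ∧ G.Adj v u ∧ φ u = c) =
              (univ.filter fun u => ι u < m ∧ G.Adj v u ∧ φ u = c) := by
            ext w; simp only [mem_filter, mem_univ, true_and, hlt w]
          rw [this]
          exact hc
  obtain ⟨φ, hprop, hodd⟩ := key (univ.sup ι + 1)
  have hall : ∀ u : V, ι u < univ.sup ι + 1 := fun u =>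
    Nat.lt_succ_of_le (Finset.le_sup (mem_univ u))
  refine ⟨φ, ?_, ?_⟩
  · intro u w hadj
    have hne : ι u ≠ ι w := fun h => G.loopless.irrefl u ((hι h) ▸ hadj)
    rcases lt_or_gt_of_ne hne with hlt | hlt
    · exact fun h => hprop w (hall w) u (hK3 w u hlt hadj.symm) h.symm
    · exact hprop u (hall u) w (hK3 u w hlt hadj)
  · intro v ⟨u, hua⟩
    obtain ⟨c, hc⟩ := hodd v (hall v) ⟨u, hall u, hua⟩
    refine ⟨c, ?_⟩
    have : colorCount G φ v c =
        ((univ.filter fun u => ι u < univ.sup ι + 1 ∧ G.Adj v u ∧ φ u = c)).card := by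
      unfold colorCount
      congr 1
      ext w
      simp only [mem_filter, mem_univ, true_and, hall w, true_and]
    rw [this]
    exact hc

end Core

section KT

lemma ktree_K {V : Type} [Fintype V] (k : ℕ) (G : SimpleGraph V) (h : IsKTree k G) :
    ∃ (ι : V → ℕ) (K : V → Finset V), Function.Injective ι ∧
      (∀ v, (K v).card ≤ k) ∧
      (∀ v, ∀ j ∈ K v, ι j < ι v) ∧
      (∀ v j, ι j < ι v → G.Adj v j → j ∈ K v) ∧
      (∀ v, ∀ j ∈ K v, ∀ j' ∈ K v, ι j' < ι j → j' ∈ K j) := by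
  classical
  obtain ⟨hcard, e, hfirst, hlater⟩ := h
  set G' := SimpleGraph.comap (fun j => e.symm j) G with hG'
  set ι : V → ℕ := fun v => (e v).val with hidef
  have hι : Function.Injective ι := fun a b hab => e.injective (Fin.val_injective hab)
  set K : V → Finset V := fun v => univ.filter fun u => ι u < ι v ∧ G.Adj v u with hKdef
  have hmem : ∀ v u, u ∈ K v ↔ (ι u < ι v ∧ G.Adj v u) := by
    intro v u; simp [hKdef]
  have hadj' : ∀ v u : V, G'.Adj (e v) (e u) ↔ G.Adj v u := by
    intro v u; simp [hG']
  have himg : ∀ v, (K v).image e = univ.filter (fun j => j < e v ∧ G'.Adj (e v) j) := by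
    intro v
    ext j
    simp only [Finset.mem_image, mem_filter, mem_univ, true_and]
    constructor
    · rintro ⟨u, hu, rfl⟩
      rw [hmem] at hu
      exact ⟨Fin.lt_def.mpr hu.1, (hadj' v u).mpr hu.2⟩
    · rintro ⟨hj1, hj2⟩
      refine ⟨e.symm j, ?_, e.apply_symm_apply j⟩
      rw [hmem]
      have hj2' : G.Adj v (e.symm j) := by
        have := (hadj' v (e.symm j)).mp (by rwa [e.apply_symm_apply])
        exact this
      refine ⟨?_, hj2'⟩
      simp only [hidef, e.apply_symm_apply]
      exact Fin.lt_def.mp hj1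
  have hcardK : ∀ v, (K v).card ≤ k := by
    intro v
    have hc : (K v).card = (univ.filter (fun j => j < e v ∧ G'.Adj (e v) j)).card := by
      rw [← himg v, Finset.card_image_of_injective _ e.injective]
    rw [hc]
    by_cases hh : k + 1 ≤ (e v).val
    · exact le_of_eq (hlater (e v) hh).card_eq
    · calc (univ.filter (fun j => j < e v ∧ G'.Adj (e v) j)).card
          ≤ (Finset.Iio (e v)).card := Finset.card_le_card (by
            intro j hj
            simp only [mem_filter] at hj
            exact Finset.mem_Iio.mpr hj.2.1)
      _ = (e v).val := by rw [Fin.card_Iio]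
      _ ≤ k := by omega
  refine ⟨ι, K, hι, hcardK, ?_, ?_, ?_⟩
  · intro v j hj; exact ((hmem v j).mp hj).1
  · intro v j h1 h2; exact (hmem v j).mpr ⟨h1, h2⟩
  · intro v j hj j' hj' hlt
    have hje : e j ∈ univ.filter (fun x => x < e v ∧ G'.Adj (e v) x) := by
      rw [← himg v]; exact Finset.mem_image_of_mem e hj
    have hj'e : e j' ∈ univ.filter (fun x => x < e v ∧ G'.Adj (e v) x) := by
      rw [← himg v]; exact Finset.mem_image_of_mem e hj'
    have hne : e j ≠ e j' := by
      intro hh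
      have hjj := e.injective hh
      subst hjj
      exact lt_irrefl _ hlt
    have hadj : G.Adj j j' := by
      by_cases hh : k + 1 ≤ (e v).val
      · have hclique := (hlater (e v) hh).isClique
        have := hclique (Finset.mem_coe.mpr hje) (Finset.mem_coe.mpr hj'e) hne
        exact (hadj' j j').mp this
      · simp only [mem_filter, mem_univ, true_and] at hje hj'e
        have h1 : (e j).val < k + 1 := by
          have := Fin.lt_def.mp hje.1; omega
        have h2 : (e j').val < k + 1 := by
          have := Fin.lt_def.mp hj'e.1; omega
        exact (hadj' j j').mp (hfirst (e j) (e j') h1 h2 hne)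
    exact (hmem j j').mpr ⟨hlt, hadj⟩

end KT

section TWK

variable {V : Type} [Fintype V]

private lemma getVert_one_mem_support {n : ℕ} {T : SimpleGraph (Fin n)} {a b : Fin n}
    (p : T.Walk a b) (h : 0 < p.length) : p.getVert 1 ∈ p.support :=
  SimpleGraph.Walk.mem_support_iff_exists_getVert.mpr ⟨1, rfl, by omega⟩

private lemma adj_getVert_one {n : ℕ} {T : SimpleGraph (Fin n)} {a b : Fin n}
    (p : T.Walk a b) (h : 0 < p.length) : T.Adj a (p.getVert 1) := by
  have := p.adj_getVert_succ (i := 0) h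
  rwa [SimpleGraph.Walk.getVert_zero] at this

private lemma length_pos_of_ne {n : ℕ} {T : SimpleGraph (Fin n)} {a b : Fin n}
    (p : T.Walk a b) (h : a ≠ b) : 0 < p.length := by
  by_contra hc
  have h0 : p.length = 0 := by omega
  exact h (SimpleGraph.Walk.eq_of_length_eq_zero h0)

lemma tw_K (k : ℕ) {n : ℕ} (T : SimpleGraph (Fin n)) (hT : T.IsTree) :
    ∀ (M : ℕ) (X : Fin n → Finset V),
      (∀ (v : V) (s s' : Fin n) (p : T.Walk s s'), p.IsPath → v ∈ X s → v ∈ X s' →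
        ∀ q ∈ p.support, v ∈ X q) →
      (∀ i, (X i).card ≤ k + 1) →
      (∑ i, (X i).card ≤ M) →
      ∃ (ι : V → ℕ) (K : V → Finset V), Function.Injective ι ∧
        (∀ v, (K v).card ≤ k) ∧
        (∀ v, ∀ j ∈ K v, ι j < ι v) ∧
        (∀ u w, u ≠ w → (∃ i, u ∈ X i ∧ w ∈ X i) → ι w < ι u → w ∈ K u) ∧
        (∀ u, ∀ j ∈ K u, ∀ j' ∈ K u, j ≠ j' → ∃ i, j ∈ X i ∧ j' ∈ X i) ∧
        (∀ u, ∀ j ∈ K u, ∃ i, j ∈ X i) := by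
  classical
  have hdist_eq : ∀ (a b : Fin n) (p : T.Walk a b), p.IsPath → T.dist a b = p.length := by
    intro a b p hp
    obtain ⟨q, hq⟩ := hT.isConnected.exists_walk_length_eq_dist a b
    have hbp : q.bypass = p :=
      (hT.existsUnique_path a b).unique q.bypass_isPath hp
    have h1 : p.length ≤ q.length := hbp ▸ q.length_bypass_le
    have h2 := SimpleGraph.dist_le p
    omega
  -- base-case construction
  have hbase : ∀ (X : Fin n → Finset V), (∀ i, X i = ∅) →
      ∃ (ι : V → ℕ) (K : V → Finset V), Function.Injective ι ∧
        (∀ v, (K v).card ≤ k) ∧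
        (∀ v, ∀ j ∈ K v, ι j < ι v) ∧
        (∀ u w, u ≠ w → (∃ i, u ∈ X i ∧ w ∈ X i) → ι w < ι u → w ∈ K u) ∧
        (∀ u, ∀ j ∈ K u, ∀ j' ∈ K u, j ≠ j' → ∃ i, j ∈ X i ∧ j' ∈ X i) ∧
        (∀ u, ∀ j ∈ K u, ∃ i, j ∈ X i) := by
    intro X hX
    refine ⟨fun v => (Fintype.equivFin V v).val, fun _ => ∅,
      fun a b hab => (Fintype.equivFin V).injective (Fin.val_injective hab),
      fun v => by simp, fun v j hj => absurd hj (Finset.notMem_empty j),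
      fun u w _ hsh _ => ?_, fun u j hj => absurd hj (Finset.notMem_empty j),
      fun u j hj => absurd hj (Finset.notMem_empty j)⟩
    obtain ⟨i, hi, -⟩ := hsh
    rw [hX i] at hi
    exact absurd hi (Finset.notMem_empty u)
  intro M
  induction M with
  | zero =>
    intro X hPath hCard hSum
    refine hbase X (fun i => ?_)
    have : (X i).card = 0 := by
      have h1 : (X i).card ≤ ∑ j, (X j).card :=
        Finset.single_le_sum (f := fun j => (X j).card) (fun j _ => Nat.zero_le _) (mem_univ i)
      omega
    exact Finset.card_eq_zero.mp this
  | succ M ih =>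
    intro X hPath hCard hSum
    by_cases hallemp : ∀ i, X i = ∅
    · exact hbase X hallemp
    push_neg at hallemp
    obtain ⟨i₀, hi₀⟩ := hallemp
    by_cases hop1 : ∃ v t, v ∈ X t ∧ ∀ s, v ∈ X s → s = t
    · -- peel a vertex living in exactly one bag
      obtain ⟨v, t, hvt, huniq⟩ := hop1
      set X' : Fin n → Finset V := fun i => (X i).erase v with hX'def
      have hPath' : ∀ (w : V) (s s' : Fin n) (p : T.Walk s s'), p.IsPath → w ∈ X' s →
          w ∈ X' s' → ∀ q ∈ p.support, w ∈ X' q := by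
        intro w s s' p hp hws hws' q hq
        obtain ⟨hwv, hws0⟩ := Finset.mem_erase.mp hws
        obtain ⟨-, hws'0⟩ := Finset.mem_erase.mp hws'
        exact Finset.mem_erase.mpr ⟨hwv, hPath w s s' p hp hws0 hws'0 q hq⟩
      have hCard' : ∀ i, (X' i).card ≤ k + 1 := fun i =>
        le_trans (Finset.card_le_card (Finset.erase_subset _ _)) (hCard i)
      have hSum' : ∑ i, (X' i).card ≤ M := by
        have hlt : ∑ i, (X' i).card < ∑ i, (X i).card := by
          refine Finset.sum_lt_sum (fun i _ => Finset.card_le_card (Finset.erase_subset _ _))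
            ⟨t, mem_univ t, Finset.card_erase_lt_of_mem hvt⟩
        omega
      obtain ⟨ι', K', hinj', h1', h2', h5', h6', h7'⟩ := ih X' hPath' hCard' hSum'
      set B : ℕ := Finset.univ.sup ι' with hB
      have hle : ∀ u : V, ι' u ≤ B := fun u => Finset.le_sup (mem_univ u)
      set ι : V → ℕ := Function.update ι' v (B + 1) with hι
      set K : V → Finset V := Function.update K' v ((X t).erase v) with hK
      have hιv : ι v = B + 1 := Function.update_self _ _ _
      have hιu : ∀ u, u ≠ v → ι u = ι' u := fun u hu => Function.update_of_ne hu _ _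
      have hKv : K v = (X t).erase v := Function.update_self _ _ _
      have hKu : ∀ u, u ≠ v → K u = K' u := fun u hu => Function.update_of_ne hu _ _
      have hKnotv : ∀ u j, u ≠ v → j ∈ K u → j ≠ v := by
        intro u j hu hj hjv
        rw [hKu u hu] at hj
        obtain ⟨i, hi⟩ := h7' u j hj
        rw [hX'def] at hi
        exact (Finset.mem_erase.mp hi).1 hjv
      refine ⟨ι, K, ?_, ?_, ?_, ?_, ?_, ?_⟩
      · intro a b hab
        by_cases ha : a = v <;> by_cases hb : b = v
        · rw [ha, hb]
        · exfalso; rw [ha, hιv, hιu b hb] at hab; have := hle b; omega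
        · exfalso; rw [hb, hιv, hιu a ha] at hab; have := hle a; omega
        · rw [hιu a ha, hιu b hb] at hab; exact hinj' hab
      · intro u
        by_cases hu : u = v
        · rw [hu, hKv, Finset.card_erase_of_mem hvt]
          have := hCard t; omega
        · rw [hKu u hu]; exact h1' u
      · intro u j hj
        by_cases hu : u = v
        · rw [hu, hKv] at hj
          have hjv : j ≠ v := (Finset.mem_erase.mp hj).1
          rw [hu, hιv, hιu j hjv]
          have := hle j; omega
        · have hjv : j ≠ v := hKnotv u j hu hj
          rw [hKu u hu] at hj
          rw [hιu u hu, hιu j hjv]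
          exact h2' u j hj
      · intro u w hne hsh hlt
        by_cases hw : w = v
        · exfalso
          have hu : u ≠ v := fun h => hne (h.trans hw.symm)
          rw [hw, hιv, hιu u hu] at hlt
          have := hle u; omega
        by_cases hu : u = v
        · obtain ⟨i, hui, hwi⟩ := hsh
          rw [hu] at hui
          have hit : i = t := huniq i hui
          rw [hu, hKv]
          exact Finset.mem_erase.mpr ⟨hw, hit ▸ hwi⟩
        · obtain ⟨i, hui, hwi⟩ := hsh
          rw [hKu u hu]
          rw [hιu u hu, hιu w hw] at hlt
          refine h5' u w hne ⟨i, ?_, ?_⟩ hlt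
          · exact Finset.mem_erase.mpr ⟨hu, hui⟩
          · exact Finset.mem_erase.mpr ⟨hw, hwi⟩
      · intro u j hj j' hj' hne
        by_cases hu : u = v
        · rw [hu, hKv] at hj hj'
          exact ⟨t, (Finset.mem_erase.mp hj).2, (Finset.mem_erase.mp hj').2⟩
        · rw [hKu u hu] at hj hj'
          obtain ⟨i, hi, hi'⟩ := h6' u j hj j' hj' hne
          rw [hX'def] at hi hi'
          exact ⟨i, (Finset.mem_erase.mp hi).2, (Finset.mem_erase.mp hi').2⟩
      · intro u j hj
        by_cases hu : u = v
        · rw [hu, hKv] at hj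
          exact ⟨t, (Finset.mem_erase.mp hj).2⟩
        · rw [hKu u hu] at hj
          obtain ⟨i, hi⟩ := h7' u j hj
          rw [hX'def] at hi
          exact ⟨i, (Finset.mem_erase.mp hi).2⟩
    · -- empty a "deepest" nonempty bag
      push_neg at hop1
      haveI : Nonempty (Fin n) := hT.isConnected.nonempty
      set r : Fin n := Classical.arbitrary (Fin n) with hr
      set NE : Finset (Fin n) := univ.filter (fun i => (X i).Nonempty) with hNE
      have hNEne : NE.Nonempty :=
        ⟨i₀, by rw [hNE, mem_filter]; exact ⟨mem_univ _, hi₀⟩⟩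
      obtain ⟨t, htNE, htmax⟩ := Finset.exists_max_image NE (fun i => T.dist r i) hNEne
      have htne : (X t).Nonempty := by
        simpa [hNE] using htNE
      have hmax : ∀ y : Fin n, (X y).Nonempty → T.dist r y ≤ T.dist r t := by
        intro y hy
        exact htmax y (by simp [hNE, hy])
      -- every vertex of X t sits in a bag at a neighbor of t
      have step : ∀ v, v ∈ X t → ∃ y, T.Adj t y ∧ v ∈ X y := by
        intro v hv
        obtain ⟨s, hvs, hst⟩ := hop1 v t hv
        obtain ⟨p, hp, -⟩ := hT.existsUnique_path t s
        have hlen : 0 < p.length := length_pos_of_ne p (fun h => hst h.symm)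
        exact ⟨p.getVert 1, adj_getVert_one p hlen,
          hPath v t s p hp hv hvs _ (getVert_one_mem_support p hlen)⟩
      obtain ⟨v₀, hv₀⟩ := htne
      have htr : t ≠ r := by
        intro h
        obtain ⟨y, hyadj, hy⟩ := step v₀ hv₀
        have hd := hmax y ⟨v₀, hy⟩
        rw [← h, SimpleGraph.dist_self] at hd
        have h0 : T.dist t y = 0 := by omega
        have : t = y := (hT.isConnected.dist_eq_zero_iff).mp h0
        exact T.loopless.irrefl t (this ▸ hyadj)
      obtain ⟨Q, hQ, -⟩ := hT.existsUnique_path t r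
      have hQlen : 0 < Q.length := length_pos_of_ne Q htr
      set t'' : Fin n := Q.getVert 1 with ht''def
      have hadj'' : T.Adj t t'' := adj_getVert_one Q hQlen
      have ht''t : t'' ≠ t := fun h => T.loopless.irrefl t (h ▸ hadj'')
      -- any neighbor of t whose bag is nonempty is t''
      have huniqnb : ∀ y, T.Adj t y → (X y).Nonempty → y = t'' := by
        intro y hadj hyne
        have hdy : T.dist r y ≤ T.dist r t := hmax y hyne
        by_cases hmem : y ∈ Q.support
        · have h1 : (Q.takeUntil y hmem).IsPath := hQ.takeUntil hmem
          have h2 : (SimpleGraph.Walk.cons hadj SimpleGraph.Walk.nil).IsPath := by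
            rw [SimpleGraph.Walk.cons_isPath_iff]
            exact ⟨SimpleGraph.Walk.IsPath.nil, by simp [hadj.ne]⟩
          have e12 : Q.takeUntil y hmem = SimpleGraph.Walk.cons hadj SimpleGraph.Walk.nil :=
            ((hT.existsUnique_path t y).unique h1 h2)
          have hspec := Q.take_spec hmem
          rw [e12] at hspec
          have : Q.getVert 1 = y := by
            rw [← hspec]
            simp [SimpleGraph.Walk.getVert_cons_succ, SimpleGraph.Walk.getVert_zero]
          rw [ht''def, this]
        · exfalso
          have hcons : (SimpleGraph.Walk.cons hadj.symm Q).IsPath := hQ.cons hmem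
          have hd1 : T.dist y r = Q.length + 1 := by
            rw [hdist_eq y r _ hcons]; simp
          have hd2 : T.dist t r = Q.length := hdist_eq t r Q hQ
          rw [SimpleGraph.dist_comm] at hd1 hd2
          omega
      have hsub : ∀ v ∈ X t, v ∈ X t'' := by
        intro v hv
        obtain ⟨y, hy, hvy⟩ := step v hv
        rwa [huniqnb y hy ⟨v, hvy⟩] at hvy
      set X' : Fin n → Finset V := Function.update X t ∅ with hX'def
      have hX't : X' t = ∅ := Function.update_self _ _ _
      have hX'i : ∀ i, i ≠ t → X' i = X i := fun i hi => Function.update_of_ne hi _ _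
      have hX'sub : ∀ i, X' i ⊆ X i := by
        intro i
        by_cases hi : i = t
        · rw [hi, hX't]; exact Finset.empty_subset _
        · rw [hX'i i hi]
      have hPath' : ∀ (w : V) (s s' : Fin n) (p : T.Walk s s'), p.IsPath → w ∈ X' s →
          w ∈ X' s' → ∀ q ∈ p.support, w ∈ X' q := by
        intro w s s' p hp hws hws' q hq
        have hst : s ≠ t := by
          intro h; rw [h, hX't] at hws; exact absurd hws (Finset.notMem_empty w)
        have hs't : s' ≠ t := by
          intro h; rw [h, hX't] at hws'; exact absurd hws' (Finset.notMem_empty w)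
        rw [hX'i s hst] at hws
        rw [hX'i s' hs't] at hws'
        have hq0 : w ∈ X q := hPath w s s' p hp hws hws' q hq
        by_cases hqt : q = t
        · exfalso
          subst hqt
          -- q = t is interior to the path; it has two distinct nonempty neighbors on it
          set p₁ := p.takeUntil q hq with hp₁def
          set p₂ := p.dropUntil q hq with hp₂def
          have hp₁ : p₁.IsPath := hp.takeUntil hq
          have hp₂ : p₂.IsPath := hp.dropUntil hq
          have hl₁ : 0 < p₁.length := length_pos_of_ne p₁ hst
          have hl₂ : 0 < p₂.length := length_pos_of_ne p₂ (fun h => hs't h.symm)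
          set y₁ : Fin n := p₁.reverse.getVert 1 with hy₁def
          have hl₁' : 0 < p₁.reverse.length := by rwa [SimpleGraph.Walk.length_reverse]
          have hy₁adj : T.Adj q y₁ := adj_getVert_one p₁.reverse hl₁'
          have hy₁mem : y₁ ∈ p₁.support := by
            have := getVert_one_mem_support p₁.reverse hl₁'
            rwa [SimpleGraph.Walk.support_reverse, List.mem_reverse] at this
          set y₂ : Fin n := p₂.getVert 1 with hy₂def
          have hy₂adj : T.Adj q y₂ := adj_getVert_one p₂ hl₂
          have hy₂mem : y₂ ∈ p₂.support := getVert_one_mem_support p₂ hl₂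
          have hwy₁ : w ∈ X y₁ :=
            hPath w s s' p hp hws hws' y₁ (p.support_takeUntil_subset hq hy₁mem)
          have hwy₂ : w ∈ X y₂ :=
            hPath w s s' p hp hws hws' y₂ (p.support_dropUntil_subset hq hy₂mem)
          have he₁ : y₁ = t'' := huniqnb y₁ hy₁adj ⟨w, hwy₁⟩
          have he₂ : y₂ = t'' := huniqnb y₂ hy₂adj ⟨w, hwy₂⟩
          -- but y₁ and y₂ are distinct since p is a path
          have hnd : (p₁.support ++ p₂.support.tail).Nodup := by
            have := hp.support_nodup
            rwa [← SimpleGraph.Walk.take_spec p hq, SimpleGraph.Walk.support_append] at this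
          have hy₂tail : y₂ ∈ p₂.support.tail := by
            have hcons := p₂.support_eq_cons
            have : y₂ ≠ q := fun h => T.loopless.irrefl q (h ▸ hy₂adj)
            rcases List.mem_cons.mp (hcons ▸ hy₂mem) with h | h
            · exact absurd h this
            · exact h
          rw [List.nodup_append] at hnd
          have heq : y₁ = y₂ := he₁.trans he₂.symm
          rw [heq] at hy₁mem
          exact hnd.2.2 _ hy₁mem _ hy₂tail rfl
        · rwa [hX'i q hqt]
      have hCard' : ∀ i, (X' i).card ≤ k + 1 := fun i =>
        le_trans (Finset.card_le_card (hX'sub i)) (hCard i)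
      have hSum' : ∑ i, (X' i).card ≤ M := by
        have hlt : ∑ i, (X' i).card < ∑ i, (X i).card := by
          refine Finset.sum_lt_sum (fun i _ => Finset.card_le_card (hX'sub i))
            ⟨t, mem_univ t, ?_⟩
          rw [hX't]
          simpa [Finset.card_pos] using ⟨v₀, hv₀⟩
        omega
      obtain ⟨ι, K, hinj, h1, h2, h5, h6, h7⟩ := ih X' hPath' hCard' hSum'
      refine ⟨ι, K, hinj, h1, h2, ?_, ?_, ?_⟩
      · intro u w hne hsh hlt
        obtain ⟨i, hui, hwi⟩ := hsh
        by_cases hit : i = t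
        · subst hit
          refine h5 u w hne ⟨t'', ?_, ?_⟩ hlt
          · rw [hX'i t'' ht''t]; exact hsub u hui
          · rw [hX'i t'' ht''t]; exact hsub w hwi
        · exact h5 u w hne ⟨i, by rwa [hX'i i hit], by rwa [hX'i i hit]⟩ hlt
      · intro u j hj j' hj' hne
        obtain ⟨i, hi, hi'⟩ := h6 u j hj j' hj' hne
        exact ⟨i, hX'sub i hi, hX'sub i hi'⟩
      · intro u j hj
        obtain ⟨i, hi⟩ := h7 u j hj
        exact ⟨i, hX'sub i hi⟩

end TWK

/-- For every positive `k`, every graph of tree-width at most `k` is odd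
`(2k+1)`-colorable; in particular every `k`-tree is odd `(2k+1)`-colorable. -/
theorem treewidth_odd_colorable (k : ℕ) (hk : 1 ≤ k) :
    (∀ (V : Type) [Fintype V] (G : SimpleGraph V),
      TreewidthAtMost G k → OddColorable G (2 * k + 1)) ∧
    (∀ (V : Type) [Fintype V] (G : SimpleGraph V),
      IsKTree k G → OddColorable G (2 * k + 1)) := by
  constructor
  · intro V _ G htw
    obtain ⟨n, T, X, hTree, hcover, hedge, hconn, hsize⟩ := htw
    have hPath : ∀ (v : V) (s s' : Fin n) (p : T.Walk s s'), p.IsPath → v ∈ X s → v ∈ X s' →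
        ∀ q ∈ p.support, v ∈ X q := by
      intro v s s' p hp hvs hvs' q hq
      obtain ⟨w⟩ := (hconn v).preconnected ⟨s, hvs⟩ ⟨s', hvs'⟩
      set f : T.induce {i : Fin n | v ∈ X i} ↪g T :=
        SimpleGraph.Embedding.induce {i : Fin n | v ∈ X i} with hf
      have hsupp : ∀ x ∈ (w.map f.toHom).support, v ∈ X x := by
        intro x hx
        rw [SimpleGraph.Walk.support_map] at hx
        obtain ⟨⟨y, hy⟩, hmem, rfl⟩ := List.mem_map.mp hx
        exact hy
      have hpb : p = (w.map f.toHom).bypass :=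
        (hTree.existsUnique_path s s').unique hp (SimpleGraph.Walk.bypass_isPath _)
      exact hsupp q (SimpleGraph.Walk.support_bypass_subset _ (hpb ▸ hq))
    obtain ⟨ι, K, hinj, h1, h2, h5, h6, h7⟩ :=
      tw_K k T hTree (∑ i, (X i).card) X hPath hsize le_rfl
    refine core_odd k G ι hinj K h1 h2 ?_ ?_
    · intro v j hlt hadj
      exact h5 v j hadj.ne (hedge v j hadj) hlt
    · intro v j hj j' hj' hlt
      have hne : j ≠ j' := by
        intro h; rw [h] at hlt; exact lt_irrefl _ hlt
      exact h5 j j' hne (h6 v j hj j' hj' hne) hlt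
  · intro V _ G hkt
    obtain ⟨ι, K, hinj, h1, h2, h3, h4⟩ := ktree_K k G hkt
    exact core_odd k G ι hinj K h1 h2 h3 h4
end

section
/- Let k be a positive integer, G a k-tree, W a k-clique of G that is the root of a branch B, and u₁,…,u_r the first r vertices of the branch in an addition ordering. Suppose W̄ = {w ∈ W : w ∉ ⋂_{i=1}^r N_G(u_i)} is nonempty. Then there is an injection σ: W̄ → {u₁,…,u_r} such that w ∉ N_G(σ(w)) for every w ∈ W̄; in particular |W̄| ≤ r. -/
open SimpleGraph Finset
open scoped Classical

section Aux


variable {n k : ℕ} {G : SimpleGraph (Fin n)}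

/-- Shortcut a walk past the vertex `m`, assuming neighbors of `m` on the walk
are pairwise adjacent. -/
lemma my_shortcut (m : Fin n) :
    ∀ (L : ℕ) {a b : Fin n} (p : G.Walk a b), p.length ≤ L →
    (∀ y ∈ p.support, ∀ z ∈ p.support, G.Adj m y → G.Adj m z → y ≠ z → G.Adj y z) →
    a ≠ m → b ≠ m →
    ∃ q : G.Walk a b, m ∉ q.support ∧ (∀ y ∈ q.support, y ∈ p.support) ∧
      (∀ y ∈ p.support, y = m ∨ y ∈ q.support) := by
  intro L
  induction L with
  | zero =>
    intro a b p hL H ha hb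
    cases p with
    | nil =>
      refine ⟨.nil, ?_, ?_, ?_⟩ <;> simp [Walk.support_nil]
      exact fun h => ha h.symm
    | cons h p' => simp [Walk.length_cons] at hL
  | succ L IH =>
    intro a b p hL H ha hb
    cases p with
    | nil =>
      refine ⟨.nil, ?_, ?_, ?_⟩ <;> simp [Walk.support_nil]
      exact fun h => ha h.symm
    | @cons _ c _ h p' =>
      by_cases hc : m = c
      · subst hc
        cases p' with
        | nil => exact absurd rfl hb
        | @cons _ d _ h2 p'' =>
          have hd : d ≠ m := h2.ne'
          have hlen : p''.length ≤ L := by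
            simp [Walk.length_cons] at hL; omega
          have hsupp : ∀ y ∈ p''.support, y ∈ (Walk.cons h (Walk.cons h2 p'')).support := by
            intro y hy; simp [Walk.support_cons]; tauto
          obtain ⟨q'', hm, hsub, hcov⟩ := IH p'' hlen
            (fun y hy z hz => H y (hsupp y hy) z (hsupp z hz)) hd hb
          by_cases had : d = a
          · subst had
            refine ⟨q'', hm, ?_, ?_⟩
            · intro y hy; exact hsupp y (hsub y hy)
            · intro y hy
              simp [Walk.support_cons] at hy
              rcases hy with rfl | rfl | hy
              · exact hcov y p''.start_mem_support
              · exact Or.inl rfl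
              · exact hcov y hy
          · have hadj : G.Adj a d := by
              refine H a ?_ d ?_ h.symm h2 (fun e => had e.symm)
              · simp [Walk.support_cons]
              · simp only [Walk.support_cons, List.mem_cons]
                exact Or.inr (Or.inr (by simp [Walk.start_mem_support]))
            refine ⟨Walk.cons hadj q'', ?_, ?_, ?_⟩
            · simp [Walk.support_cons]
              exact ⟨fun e => ha e.symm, hm⟩
            · intro y hy
              simp [Walk.support_cons] at hy ⊢
              rcases hy with rfl | hy
              · exact Or.inl rfl
              · have := hsub y hy; tauto
            · intro y hy
              simp [Walk.support_cons] at hy ⊢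
              rcases hy with rfl | rfl | hy
              · tauto
              · tauto
              · rcases hcov y hy with h' | h' <;> tauto
      · have hlen : p'.length ≤ L := by simp [Walk.length_cons] at hL; omega
        have hsupp : ∀ y ∈ p'.support, y ∈ (Walk.cons h p').support := by
          intro y hy; simp [Walk.support_cons]; tauto
        obtain ⟨q', hm, hsub, hcov⟩ := IH p' hlen
          (fun y hy z hz => H y (hsupp y hy) z (hsupp z hz)) (fun e => hc e.symm) hb
        refine ⟨Walk.cons h q', ?_, ?_, ?_⟩
        · simp [Walk.support_cons]
          exact ⟨fun e => ha e.symm, hm⟩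
        · intro y hy
          simp [Walk.support_cons] at hy ⊢
          rcases hy with rfl | hy
          · exact Or.inl rfl
          · exact Or.inr (hsub y hy)
        · intro y hy
          simp [Walk.support_cons] at hy ⊢
          rcases hy with rfl | hy
          · tauto
          · rcases hcov y hy with h' | h' <;> tauto

/-- Separation: every walk from `i` avoiding `rootClique G i` stays at vertices `≥ i`. -/
lemma my_sep (hG : IsAdditionOrdering k G) {i : Fin n} (hi : k + 1 ≤ i.val) :
    ∀ (M : ℕ) {x : Fin n} (p : G.Walk i x),
    (∀ y ∈ p.support, y ∉ rootClique G i) → (∀ y ∈ p.support, y.val ≤ M) →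
    ∀ y ∈ p.support, i ≤ y := by
  intro M
  induction M using Nat.strong_induction_on with
  | _ M IHM =>
  intro x p havoid hbd
  by_cases hMi : M ≤ i.val
  · cases p with
    | nil =>
      intro y hy; simp [Walk.support_nil] at hy; exact le_of_eq hy.symm
    | @cons _ c _ h p' =>
      exfalso
      have hc : c ∈ (Walk.cons h p').support := by simp [Walk.support_cons]
      have hcle : c.val ≤ i.val := le_trans (hbd c hc) hMi
      have hci : c ≠ i := h.ne'
      have : c < i := lt_of_le_of_ne (by exact_mod_cast hcle) hci
      exact havoid c hc (by simp [rootClique]; exact ⟨this, h⟩)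
  · push_neg at hMi
    by_cases hex : ∃ y ∈ p.support, y.val = M
    · obtain ⟨m, hmS, hmv⟩ := hex
      have hmi : i < m := by rw [Fin.lt_def]; omega
      have hmk : k + 1 ≤ m.val := by omega
      have hclq := hG.2 m hmk
      have Hcl : ∀ y ∈ p.support, ∀ z ∈ p.support,
          G.Adj m y → G.Adj m z → y ≠ z → G.Adj y z := by
        intro y hy z hz hay haz hne
        have hym : y < m := by
          have := hbd y hy
          exact lt_of_le_of_ne (by rw [Fin.le_def]; omega) hay.ne'
        have hzm : z < m := by
          have := hbd z hz
          exact lt_of_le_of_ne (by rw [Fin.le_def]; omega) haz.ne'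
        have hy' : y ∈ Finset.univ.filter fun j => j < m ∧ G.Adj m j := by
          simp; exact ⟨hym, hay⟩
        have hz' : z ∈ Finset.univ.filter fun j => j < m ∧ G.Adj m j := by
          simp; exact ⟨hzm, haz⟩
        exact hclq.1 hy' hz' hne
      have him : i ≠ m := fun e => by omega
      -- helper to finish given a walk with endpoints ≠ m whose support covers things
      by_cases hx : m = x
      · subst hx
        -- decompose from the reverse
        cases hrev : p.reverse with
        | nil => exact absurd rfl him
        | @cons _ y' _ h2 t =>
          have hy'm : y' ≠ m := h2.ne'
          have hts : ∀ y ∈ t.support, y ∈ p.support := by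
            intro y hy
            have : y ∈ p.reverse.support := by rw [hrev]; simp [Walk.support_cons]; tauto
            simpa [Walk.support_reverse] using this
          have htr : ∀ y ∈ t.reverse.support, y ∈ p.support := by
            intro y hy; exact hts y (by simpa [Walk.support_reverse] using hy)
          obtain ⟨q, hqm, hqsub, hqcov⟩ := my_shortcut m p.length t.reverse
            (by
              have : t.length ≤ p.length := by
                have := congrArg Walk.length hrev
                simp [Walk.length_reverse, Walk.length_cons] at this
                simp [Walk.length_reverse]; omega
              simpa [Walk.length_reverse] using this)
            (fun y hy z hz => Hcl y (htr y hy) z (htr z hz)) him hy'm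
          have hqp : ∀ y ∈ q.support, y ∈ p.support := fun y hy => htr y (hqsub y hy)
          have hq_i : ∀ y ∈ q.support, i ≤ y := by
            refine IHM (M - 1) (by omega) q (fun y hy => havoid y (hqp y hy)) ?_
            intro y hy
            have h1 : y.val ≤ M := hbd y (hqp y hy)
            have h2 : y ≠ m := fun e => hqm (e ▸ hy)
            have : y.val ≠ M := fun e => h2 (Fin.val_injective (by omega))
            omega
          intro y hy
          have : y ∈ p.reverse.support := by simpa [Walk.support_reverse] using hy
          rw [hrev] at this
          simp [Walk.support_cons] at this
          rcases this with rfl | hyt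
          · exact le_of_lt hmi
          · rcases hqcov y (by simpa [Walk.support_reverse] using hyt) with rfl | h'
            · exact le_of_lt hmi
            · exact hq_i y h'
      · obtain ⟨q, hqm, hqsub, hqcov⟩ := my_shortcut m p.length p le_rfl Hcl him (fun e => hx e.symm)
        have hq_i : ∀ y ∈ q.support, i ≤ y := by
          refine IHM (M - 1) (by omega) q (fun y hy => havoid y (hqsub y hy)) ?_
          intro y hy
          have h1 : y.val ≤ M := hbd y (hqsub y hy)
          have h2 : y ≠ m := fun e => hqm (e ▸ hy)
          have : y.val ≠ M := fun e => h2 (Fin.val_injective (by omega))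
          omega
        intro y hy
        rcases hqcov y hy with rfl | h'
        · exact le_of_lt hmi
        · exact hq_i y h'
    · push_neg at hex
      refine IHM (M - 1) (by omega) p havoid ?_
      intro y hy
      have h1 := hbd y hy
      have h2 := hex y hy
      omega

lemma my_branch_ge (hG : IsAdditionOrdering k G) {i : Fin n} (hi : k + 1 ≤ i.val)
    {x : Fin n} (hx : x ∈ branchSet G i) : i ≤ x := by
  obtain ⟨-, p, hp⟩ := hx
  exact my_sep hG hi n p hp (fun y _ => le_of_lt y.isLt) x p.end_mem_support

/-- No clique of size `k+2` in a `k`-addition-ordered graph. -/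
lemma my_clique_bound (hG : IsAdditionOrdering k G)
    (C : Finset (Fin n)) (hC : ∀ x ∈ C, ∀ y ∈ C, x ≠ y → G.Adj x y) :
    C.card ≤ k + 1 := by
  by_contra hcard
  push_neg at hcard
  have hne : C.Nonempty := Finset.card_pos.mp (by omega)
  set m := C.max' hne with hm
  have hmC : m ∈ C := C.max'_mem hne
  by_cases hmk : k + 1 ≤ m.val
  · have hclq := hG.2 m hmk
    have hsub : C.erase m ⊆ Finset.univ.filter fun j => j < m ∧ G.Adj m j := by
      intro x hx
      obtain ⟨hxm, hxC⟩ := Finset.mem_erase.mp hx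
      have : x < m := lt_of_le_of_ne (C.le_max' x hxC) hxm
      simp
      exact ⟨this, hC m hmC x hxC (fun e => hxm e.symm)⟩
    have h1 : C.card - 1 ≤ k := by
      have := Finset.card_le_card hsub
      rw [Finset.card_erase_of_mem hmC, hclq.2] at this
      exact this
    omega
  · push_neg at hmk
    have hsub : C.image Fin.val ⊆ Finset.range (k + 1) := by
      intro v hv
      obtain ⟨x, hxC, rfl⟩ := Finset.mem_image.mp hv
      have : x ≤ m := C.le_max' x hxC
      rw [Finset.mem_range]
      rw [Fin.le_def] at this
      omega
    have : C.card ≤ k + 1 := by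
      rw [← Finset.card_image_of_injective C Fin.val_injective]
      simpa using Finset.card_le_card hsub
    omega

end Aux

/-- If `U` consists of the first `r` branch vertices after the apex, then
there is an injection `σ` from `W̄ = {w ∈ W : w ∉ ⋂_{u ∈ U} N(u)}` to `U` with
`w ∉ N(σ w)`; in particular `|W̄| ≤ r`. -/
theorem branch_nonneighbor_injection {n k r : ℕ} (hk : 1 ≤ k)
    (G : SimpleGraph (Fin n)) (hG : IsAdditionOrdering k G)
    (i : Fin n) (hi : k + 1 ≤ i.val) (U : Finset (Fin n))
    (hU : ∀ u ∈ U, u ∈ branchSet G i ∧ i < u)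
    (hUcard : U.card = r)
    (hUinit : ∀ x : Fin n, x ∈ branchSet G i → i < x → x ∉ U → ∀ u ∈ U, u < x)
    (hW : ((rootClique G i).filter fun w => ∃ u ∈ U, ¬ G.Adj u w).Nonempty) :
    ∃ σ : Fin n → Fin n,
      Set.InjOn σ ↑((rootClique G i).filter fun w => ∃ u ∈ U, ¬ G.Adj u w) ∧
      (∀ w ∈ (rootClique G i).filter fun w => ∃ u ∈ U, ¬ G.Adj u w,
        σ w ∈ U ∧ ¬ G.Adj (σ w) w) ∧
      ((rootClique G i).filter fun w => ∃ u ∈ U, ¬ G.Adj u w).card ≤ r := by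
  have hWclq := hG.2 i hi
  have hWmem : ∀ w ∈ rootClique G i, w < i ∧ G.Adj i w := by
    intro w hw; simpa [rootClique] using hw
  -- key: each u ∈ U is the least non-neighbor of at most one w ∈ W
  have key : ∀ u ∈ U, ∀ w ∈ rootClique G i, ∀ w' ∈ rootClique G i,
      ¬ G.Adj u w → ¬ G.Adj u w' →
      (∀ u' ∈ U, u' < u → G.Adj u' w) → (∀ u' ∈ U, u' < u → G.Adj u' w') →
      w = w' := by
    intro u hu w hw w' hw' hnw hnw' hall hall'
    by_contra hne
    obtain ⟨hub, hui⟩ := hU u hu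
    have huk : k + 1 ≤ u.val := by
      rw [Fin.lt_def] at hui; omega
    have hSclq := hG.2 u huk
    set S := Finset.univ.filter (fun j => j < u ∧ G.Adj u j) with hS
    -- every element of S is adjacent to w and w'
    have hadjS : ∀ x ∈ S, ∀ v ∈ rootClique G i,
        (∀ u' ∈ U, u' < u → G.Adj u' v) → ¬ G.Adj u v → G.Adj x v := by
      intro x hxS v hv hallv hnv
      simp only [hS, Finset.mem_filter, Finset.mem_univ, true_and] at hxS
      obtain ⟨hxu, hux⟩ := hxS
      have hxv : x ≠ v := by rintro rfl; exact hnv hux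
      by_cases hxW : x ∈ rootClique G i
      · exact hWclq.1 (by simpa [rootClique] using hxW) (by simpa [rootClique] using hv) hxv
      · -- x is in the branch
        have hxb : x ∈ branchSet G i := by
          obtain ⟨-, p, hp⟩ := hub
          refine ⟨hxW, p.concat hux, ?_⟩
          intro y hy
          rw [Walk.support_concat, List.mem_append] at hy
          rcases hy with hy | hy
          · exact hp y hy
          · simp at hy; subst hy; exact hxW
        by_cases hxi : x = i
        · subst hxi
          exact ((hWmem v hv).2)
        · have : i < x := lt_of_le_of_ne (my_branch_ge hG hi hxb) (fun e => hxi e.symm)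
          by_cases hxU : x ∈ U
          · exact (hallv x hxU hxu)
          · exact absurd (hUinit x hxb this hxU u hu) (by exact fun h => absurd hxu (asymm h))
    -- C = insert w (insert w' S) is a (k+2)-clique
    have hwS : w ∉ S := by
      simp only [hS, Finset.mem_filter]; rintro ⟨-, -, h⟩; exact hnw h
    have hw'S : w' ∉ S := by
      simp only [hS, Finset.mem_filter]; rintro ⟨-, -, h⟩; exact hnw' h
    have hww' : G.Adj w w' :=
      hWclq.1 (by simpa [rootClique] using hw) (by simpa [rootClique] using hw') hne
    have hCclq : ∀ x ∈ insert w (insert w' S), ∀ y ∈ insert w (insert w' S),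
        x ≠ y → G.Adj x y := by
      intro x hx y hy hxy
      simp only [Finset.mem_insert] at hx hy
      rcases hx with rfl | rfl | hx <;> rcases hy with rfl | rfl | hy
      · exact absurd rfl hxy
      · exact hww'
      · exact (hadjS y hy x hw hall hnw).symm
      · exact hww'.symm
      · exact absurd rfl hxy
      · exact (hadjS y hy x hw' hall' hnw').symm
      · exact hadjS x hx y hw hall hnw
      · exact hadjS x hx y hw' hall' hnw'
      · exact hSclq.1 (by simpa [hS] using hx) (by simpa [hS] using hy) hxy
    have hcard : (insert w (insert w' S)).card = k + 2 := by
      rw [Finset.card_insert_of_notMem (by simp only [Finset.mem_insert, not_or]; exact ⟨hne, hwS⟩),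
        Finset.card_insert_of_notMem hw'S, hSclq.2]
    have := my_clique_bound hG _ hCclq
    omega
  -- define σ
  set Wb := (rootClique G i).filter fun w => ∃ u ∈ U, ¬ G.Adj u w with hWb
  have hfilt : ∀ w ∈ Wb, (U.filter fun u => ¬ G.Adj u w).Nonempty := by
    intro w hw
    obtain ⟨-, u, hu, hnadj⟩ := Finset.mem_filter.mp hw
    exact ⟨u, Finset.mem_filter.mpr ⟨hu, hnadj⟩⟩
  set σ : Fin n → Fin n := fun w =>
    if h : (U.filter fun u => ¬ G.Adj u w).Nonempty then (U.filter fun u => ¬ G.Adj u w).min' h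
    else w with hσ
  have hσmem : ∀ w ∈ Wb, σ w ∈ U.filter fun u => ¬ G.Adj u w := by
    intro w hw
    rw [hσ]; simp only [dif_pos (hfilt w hw)]
    exact Finset.min'_mem _ _
  have hσleast : ∀ w ∈ Wb, ∀ u' ∈ U, u' < σ w → G.Adj u' w := by
    intro w hw u' hu' hlt
    by_contra hna
    have : σ w ≤ u' := by
      rw [hσ]; simp only [dif_pos (hfilt w hw)]
      exact Finset.min'_le _ _ (Finset.mem_filter.mpr ⟨hu', hna⟩)
    exact absurd hlt (not_lt.mpr this)
  have hinj : Set.InjOn σ ↑Wb := by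
    intro w hw w' hw' heq
    rw [Finset.mem_coe] at hw hw'
    have h1 := hσmem w hw
    have h2 := hσmem w' hw'
    rw [Finset.mem_filter] at h1 h2
    rw [heq] at h1
    exact key (σ w') h1.1 w (Finset.mem_filter.mp hw).1 w' (Finset.mem_filter.mp hw').1
      h1.2 h2.2 (heq ▸ hσleast w hw) (hσleast w' hw')
  refine ⟨σ, hinj, ?_, ?_⟩
  · intro w hw
    have := hσmem w hw
    rw [Finset.mem_filter] at this
    exact ⟨this.1, this.2⟩
  · have : Wb.card ≤ U.card := by
      refine Finset.card_le_card_of_injOn σ (fun w hw => (Finset.mem_filter.mp (hσmem w hw)).1) ?_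
      intro w hw w' hw' h
      exact hinj (Finset.mem_coe.mpr hw) (Finset.mem_coe.mpr hw') h
    omega
end

section
/- Every 2-tree of order at least 4 contains a subgraph H belonging to the family H⁽²⁾(G) ∪ T⁽²⁾(G) that is neither a hat nor a double hat of G (unavoidable configurations lemma for 2-trees). -/
open SimpleGraph Finset
open scoped Classical

section Defs
variable {V : Type*}

/-- An ear of a 2-tree over the edge `{v₁,v₂}`. -/
def IsEar2 (G : SimpleGraph V) (v₁ v₂ u₀ : V) : Prop :=
  G.Adj v₁ v₂ ∧ G.neighborSet u₀ = {v₁, v₂}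

/-- A hat of a 2-tree over the edge `{v₁,v₂}`. -/
def IsHat2 (G : SimpleGraph V) (v₁ v₂ u₀ u₁ u₂ : V) : Prop :=
  G.Adj v₁ v₂ ∧ G.neighborSet u₀ = {v₁, v₂, u₁, u₂} ∧
  G.neighborSet u₁ = {v₁, u₀} ∧ G.neighborSet u₂ = {v₂, u₀}

/-- A double hat of a 2-tree over the edge `{v₁,v₂}`. -/
def IsDoubleHat2 (G : SimpleGraph V) (v₁ v₂ u₀ u₁ u₂ u₃ u₄ u₅ u₆ : V) : Prop :=
  G.Adj v₁ v₂ ∧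
  G.neighborSet u₀ = {v₁, v₂, u₁, u₂, u₄, u₅} ∧
  G.neighborSet u₁ = {v₁, u₀, u₃, u₄} ∧
  G.neighborSet u₂ = {v₂, u₀, u₅, u₆} ∧
  G.neighborSet u₃ = {v₁, u₁} ∧ G.neighborSet u₄ = {u₀, u₁} ∧
  G.neighborSet u₅ = {u₀, u₂} ∧ G.neighborSet u₆ = {v₂, u₂}

/-- The branch over the edge `{a,b}` with apex `u` is an ear, a hat, or a double hat. -/
def SpecialBranch2 (G : SimpleGraph V) (a b u : V) : Prop :=
  IsEar2 G a b u ∨ (∃ x y, IsHat2 G a b u x y) ∨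
  ∃ x₁ x₂ x₃ x₄ x₅ x₆, IsDoubleHat2 G a b u x₁ x₂ x₃ x₄ x₅ x₆

/-- `|N(u₀) ∩ N(a)| ≤ 1`. -/
def Side2Small (G : SimpleGraph V) (a u₀ : V) : Prop :=
  (G.neighborSet u₀ ∩ G.neighborSet a).Subsingleton

/-- `N(u₀) ∩ N(a) = {b, u}` with `B({a,u₀},u)` an ear, hat or double hat. -/
def Side2Branch (G : SimpleGraph V) (a b u₀ : V) : Prop :=
  ∃ u, b ≠ u ∧ G.neighborSet u₀ ∩ G.neighborSet a = {b, u} ∧ SpecialBranch2 G a u₀ u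

/-- Membership of the branch `B({v₁,v₂},u₀)` in `𝓗⁽²⁾(G)`. -/
def InH2 (G : SimpleGraph V) (v₁ v₂ u₀ : V) : Prop :=
  G.Adj v₁ v₂ ∧ G.Adj v₁ u₀ ∧ G.Adj v₂ u₀ ∧
  (Side2Small G v₁ u₀ ∨ Side2Branch G v₁ v₂ u₀) ∧
  (Side2Small G v₂ u₀ ∨ Side2Branch G v₂ v₁ u₀) ∧
  (Side2Branch G v₁ v₂ u₀ ∨ Side2Branch G v₂ v₁ u₀)

/-- Membership of a pair of special branches over the edge `{v₁,v₂}` in `𝓣⁽²⁾(G)`. -/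
def InT2 (G : SimpleGraph V) (v₁ v₂ : V) : Prop :=
  ∃ u₀ w₀, u₀ ≠ w₀ ∧ SpecialBranch2 G v₁ v₂ u₀ ∧ SpecialBranch2 G v₁ v₂ w₀

/-- An ear of a 3-tree over the triangle `{v₁,v₂,v₃}`. -/
def IsEar3 (G : SimpleGraph V) (v₁ v₂ v₃ u₀ : V) : Prop :=
  G.Adj v₁ v₂ ∧ G.Adj v₂ v₃ ∧ G.Adj v₁ v₃ ∧ G.neighborSet u₀ = {v₁, v₂, v₃}

/-- A one-hat of a 3-tree over the triangle `{v₁,v₂,v₃}`. -/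
def IsOneHat3 (G : SimpleGraph V) (v₁ v₂ v₃ u₀ u₁ : V) : Prop :=
  G.Adj v₁ v₂ ∧ G.Adj v₂ v₃ ∧ G.Adj v₁ v₃ ∧
  G.neighborSet u₀ = {v₁, v₂, v₃, u₁} ∧ G.neighborSet u₁ = {v₁, v₂, u₀}

/-- A one-hat plus of a 3-tree over the triangle `{v₁,v₂,v₃}`. -/
def IsOneHatPlus3 (G : SimpleGraph V) (v₁ v₂ v₃ u₀ u₁ u₂ u₃ : V) : Prop :=
  G.Adj v₁ v₂ ∧ G.Adj v₂ v₃ ∧ G.Adj v₁ v₃ ∧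
  G.neighborSet u₀ = {v₁, v₂, v₃, u₁, u₂, u₃} ∧
  G.neighborSet u₁ = {v₁, v₂, u₀, u₃} ∧
  G.neighborSet u₂ = {v₂, v₃, u₀} ∧
  G.neighborSet u₃ = {v₁, u₀, u₁}

/-- The branch over the (unordered) triangle `{a,b,c}` with apex `u` is a one-hat. -/
def IsOneHatBranch3 (G : SimpleGraph V) (a b c u : V) : Prop :=
  ∃ x, IsOneHat3 G a b c u x ∨ IsOneHat3 G b c a u x ∨ IsOneHat3 G c a b u x

/-- The branch over the (unordered) triangle `{a,b,c}` with apex `u` is a one-hat plus. -/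
def IsOneHatPlusBranch3 (G : SimpleGraph V) (a b c u : V) : Prop :=
  ∃ x₁ x₂ x₃,
    IsOneHatPlus3 G a b c u x₁ x₂ x₃ ∨ IsOneHatPlus3 G b c a u x₁ x₂ x₃ ∨
    IsOneHatPlus3 G c a b u x₁ x₂ x₃ ∨ IsOneHatPlus3 G a c b u x₁ x₂ x₃ ∨
    IsOneHatPlus3 G b a c u x₁ x₂ x₃ ∨ IsOneHatPlus3 G c b a u x₁ x₂ x₃

/-- The branch over the triangle `{a,b,c}` with apex `u` is an ear, one-hat or one-hat plus. -/
def SpecialBranch3 (G : SimpleGraph V) (a b c u : V) : Prop :=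
  IsEar3 G a b c u ∨ IsOneHatBranch3 G a b c u ∨ IsOneHatPlusBranch3 G a b c u

/-- `|N(u₀) ∩ N(a) ∩ N(b)| ≤ 1`. -/
def Side3Small (G : SimpleGraph V) (a b u₀ : V) : Prop :=
  (G.neighborSet u₀ ∩ G.neighborSet a ∩ G.neighborSet b).Subsingleton

/-- `N(u₀) ∩ N(a) ∩ N(b) = {c, u}` with `B({a,b,u₀},u)` an ear, one-hat or one-hat plus. -/
def Side3Branch (G : SimpleGraph V) (a b c u₀ : V) : Prop :=
  ∃ u, c ≠ u ∧ G.neighborSet u₀ ∩ G.neighborSet a ∩ G.neighborSet b = {c, u} ∧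
    SpecialBranch3 G a b u₀ u

/-- Membership of the branch `B({v₁,v₂,v₃},u₀)` in `𝓗⁽³⁾(G)`. -/
def InH3 (G : SimpleGraph V) (v₁ v₂ v₃ u₀ : V) : Prop :=
  G.Adj v₁ v₂ ∧ G.Adj v₂ v₃ ∧ G.Adj v₁ v₃ ∧
  G.Adj v₁ u₀ ∧ G.Adj v₂ u₀ ∧ G.Adj v₃ u₀ ∧
  (Side3Small G v₁ v₂ u₀ ∨ Side3Branch G v₁ v₂ v₃ u₀) ∧
  (Side3Small G v₂ v₃ u₀ ∨ Side3Branch G v₂ v₃ v₁ u₀) ∧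
  (Side3Small G v₃ v₁ u₀ ∨ Side3Branch G v₃ v₁ v₂ u₀) ∧
  (Side3Branch G v₁ v₂ v₃ u₀ ∨ Side3Branch G v₂ v₃ v₁ u₀ ∨ Side3Branch G v₃ v₁ v₂ u₀)

/-- Membership of a pair of special branches over the triangle `{v₁,v₂,v₃}` in `𝓣⁽³⁾(G)`. -/
def InT3 (G : SimpleGraph V) (v₁ v₂ v₃ : V) : Prop :=
  ∃ u₀ w₀, u₀ ≠ w₀ ∧ SpecialBranch3 G v₁ v₂ v₃ u₀ ∧ SpecialBranch3 G v₁ v₂ v₃ w₀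
end Defs

section TwoTreeAux

open SimpleGraph

variable {n : ℕ}

namespace TwoTreeAux

/-- membership in a pinned neighborhood gives adjacency -/
lemma adj_of_nb {H : SimpleGraph (Fin n)} {p q : Fin n} {s : Set (Fin n)}
    (h : H.neighborSet p = s) (hq : q ∈ s) : H.Adj p q := by
  rw [← SimpleGraph.mem_neighborSet, h]; exact hq

lemma mem_of_nb {H : SimpleGraph (Fin n)} {p q : Fin n} {s : Set (Fin n)}
    (h : H.neighborSet p = s) (ha : H.Adj p q) : q ∈ s := by
  rw [← h]; exact ha

/-- "two true parents" of a vertex in the addition ordering -/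
def TTP (H : SimpleGraph (Fin n)) (i a b : Fin n) : Prop :=
  a ≠ b ∧ a < i ∧ b < i ∧ H.Adj i a ∧ H.Adj i b ∧ H.Adj a b ∧
    ∀ j, j < i → H.Adj i j → j = a ∨ j = b

lemma ttp_swap {H : SimpleGraph (Fin n)} {i a b : Fin n} (h : TTP H i a b) : TTP H i b a :=
  ⟨h.1.symm, h.2.2.1, h.2.1, h.2.2.2.2.1, h.2.2.2.1, h.2.2.2.2.2.1.symm,
    fun j hj ha => (h.2.2.2.2.2.2 j hj ha).symm⟩

lemma parents_exist {H : SimpleGraph (Fin n)} (hord : IsAdditionOrdering 2 H)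
    {i : Fin n} (hi : 2 ≤ i.val) : ∃ a b, TTP H i a b := by
  rcases Nat.lt_or_ge i.val 3 with h3 | h3
  · -- i.val = 2
    have hi2 : i.val = 2 := by omega
    have h0 : (0 : ℕ) < n := by omega
    have h1 : (1 : ℕ) < n := by omega
    refine ⟨⟨0, h0⟩, ⟨1, h1⟩, ?_, ?_, ?_, ?_, ?_, ?_, ?_⟩
    · simp [Fin.ext_iff]
    · simp [Fin.lt_def, hi2]
    · simp [Fin.lt_def, hi2]
    · exact hord.1 i ⟨0, h0⟩ (by omega) (by simp) (by simp [Fin.ext_iff]; omega)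
    · exact hord.1 i ⟨1, h1⟩ (by omega) (by simp) (by simp [Fin.ext_iff]; omega)
    · exact hord.1 ⟨0, h0⟩ ⟨1, h1⟩ (by simp) (by simp) (by simp [Fin.ext_iff])
    · intro j hj _
      have : j.val < 2 := by simpa [Fin.lt_def, hi2] using hj
      have h01 : j.val = 0 ∨ j.val = 1 := by omega
      rcases h01 with h | h
      · left; exact Fin.ext h
      · right; exact Fin.ext h
  · -- i.val ≥ 3
    have hcl := hord.2 i h3
    rw [SimpleGraph.isNClique_iff] at hcl
    obtain ⟨a, b, hab, hset⟩ := Finset.card_eq_two.mp hcl.2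
    have hmem : ∀ j : Fin n, j ∈ (Finset.univ.filter fun j => j < i ∧ H.Adj i j) ↔
        (j < i ∧ H.Adj i j) := by intro j; simp
    have ha : a < i ∧ H.Adj i a := by
      have := (hmem a).mp; rw [hset] at this; exact this (by simp)
    have hb : b < i ∧ H.Adj i b := by
      have := (hmem b).mp; rw [hset] at this; exact this (by simp)
    have hadj : H.Adj a b := by
      have hc := hcl.1
      rw [hset] at hc
      exact hc (by simp) (by simp) hab
    refine ⟨a, b, hab, ha.1, hb.1, ha.2, hb.2, hadj, ?_⟩
    intro j hj haj
    have : j ∈ (Finset.univ.filter fun j => j < i ∧ H.Adj i j) := (hmem j).mpr ⟨hj, haj⟩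
    rw [hset] at this
    simpa using this

/-- a vertex of index ≥ 3 with two given earlier neighbours that are adjacent -/
lemma ttp_of_two {H : SimpleGraph (Fin n)} (hord : IsAdditionOrdering 2 H)
    {w a i : Fin n} (hw : 2 ≤ w.val) (haw : a < w) (hiw : i < w) (hai : a ≠ i)
    (hwa : H.Adj w a) (hwi : H.Adj w i) (h' : H.Adj a i) : TTP H w a i := by
  obtain ⟨c, d, hc⟩ := parents_exist hord hw
  refine ⟨hai, haw, hiw, hwa, hwi, h', ?_⟩
  have hch := hc.2.2.2.2.2.2
  have ha' := hch a haw hwa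
  have hi' := hch i hiw hwi
  have hkey : (a = c ∧ i = d) ∨ (a = d ∧ i = c) := by
    rcases ha' with h2 | h2 <;> rcases hi' with h3 | h3
    · exact absurd (h2.trans h3.symm) hai
    · exact Or.inl ⟨h2, h3⟩
    · exact Or.inr ⟨h2, h3⟩
    · exact absurd (h2.trans h3.symm) hai
  intro j hj hja
  rcases hkey with ⟨h2, h3⟩ | ⟨h2, h3⟩ <;> subst h2 <;> subst h3 <;>
    rcases hch j hj hja with h | h <;> tauto

lemma val_ge_two {H : SimpleGraph (Fin n)} {i a b : Fin n} (h : TTP H i a b) : 2 ≤ i.val := by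
  have h1 := h.2.1
  have h2 := h.2.2.1
  rw [Fin.lt_def] at h1 h2
  have : a.val ≠ b.val := fun hh => h.1 (Fin.ext hh)
  omega

end TwoTreeAux
end TwoTreeAux
namespace TwoTreeAux

section Transfer

variable {V : Type*} {n : ℕ} (G : SimpleGraph V) (e : V ≃ Fin n)

lemma nbG_eq (i : Fin n) :
    G.neighborSet (e.symm i) =
      e.symm '' (SimpleGraph.comap (fun j : Fin n => e.symm j) G).neighborSet i := by
  ext w
  simp only [SimpleGraph.mem_neighborSet, Set.mem_image]
  constructor
  · intro h
    refine ⟨e w, ?_, by simp⟩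
    show G.Adj (e.symm i) (e.symm (e w))
    simpa using h
  · rintro ⟨z, hz, rfl⟩
    exact hz

lemma nb_pin_iff (i : Fin n) (s : Set (Fin n)) :
    (SimpleGraph.comap (fun j : Fin n => e.symm j) G).neighborSet i = s ↔
      G.neighborSet (e.symm i) = e.symm '' s := by
  rw [nbG_eq G e i]
  constructor
  · intro h; rw [h]
  · intro h; exact (Set.image_injective.mpr e.symm.injective) h

lemma nb_pin2 (i a b : Fin n) :
    (SimpleGraph.comap (fun j : Fin n => e.symm j) G).neighborSet i = {a, b} ↔
      G.neighborSet (e.symm i) = {e.symm a, e.symm b} := by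
  rw [nb_pin_iff]; simp [Set.image_insert_eq]

lemma nb_pin4 (i a b c d : Fin n) :
    (SimpleGraph.comap (fun j : Fin n => e.symm j) G).neighborSet i = {a, b, c, d} ↔
      G.neighborSet (e.symm i) = {e.symm a, e.symm b, e.symm c, e.symm d} := by
  rw [nb_pin_iff]; simp [Set.image_insert_eq]

lemma nb_pin6 (i a b c d f g : Fin n) :
    (SimpleGraph.comap (fun j : Fin n => e.symm j) G).neighborSet i = {a, b, c, d, f, g} ↔
      G.neighborSet (e.symm i) =
        {e.symm a, e.symm b, e.symm c, e.symm d, e.symm f, e.symm g} := by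
  rw [nb_pin_iff]; simp [Set.image_insert_eq]

lemma ear_iff (a b c : Fin n) :
    IsEar2 (SimpleGraph.comap (fun j : Fin n => e.symm j) G) a b c ↔
      IsEar2 G (e.symm a) (e.symm b) (e.symm c) := by
  unfold IsEar2
  rw [nb_pin2]
  simp [SimpleGraph.comap_adj]

lemma hat_iff (a b c x y : Fin n) :
    IsHat2 (SimpleGraph.comap (fun j : Fin n => e.symm j) G) a b c x y ↔
      IsHat2 G (e.symm a) (e.symm b) (e.symm c) (e.symm x) (e.symm y) := by
  unfold IsHat2
  rw [nb_pin4, nb_pin2, nb_pin2]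
  simp [SimpleGraph.comap_adj]

lemma dh_iff (a b c x₁ x₂ x₃ x₄ x₅ x₆ : Fin n) :
    IsDoubleHat2 (SimpleGraph.comap (fun j : Fin n => e.symm j) G) a b c x₁ x₂ x₃ x₄ x₅ x₆ ↔
      IsDoubleHat2 G (e.symm a) (e.symm b) (e.symm c) (e.symm x₁) (e.symm x₂) (e.symm x₃)
        (e.symm x₄) (e.symm x₅) (e.symm x₆) := by
  unfold IsDoubleHat2
  rw [nb_pin6, nb_pin4, nb_pin4, nb_pin2, nb_pin2, nb_pin2, nb_pin2]
  simp [SimpleGraph.comap_adj]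

lemma hat_ex_iff (a b c : Fin n) :
    (∃ x y, IsHat2 (SimpleGraph.comap (fun j : Fin n => e.symm j) G) a b c x y) ↔
      (∃ x y, IsHat2 G (e.symm a) (e.symm b) (e.symm c) x y) := by
  constructor
  · rintro ⟨x, y, h⟩
    exact ⟨e.symm x, e.symm y, (hat_iff G e a b c x y).mp h⟩
  · rintro ⟨x, y, h⟩
    refine ⟨e x, e y, (hat_iff G e a b c (e x) (e y)).mpr ?_⟩
    simpa using h

lemma dh_ex_iff (a b c : Fin n) :
    (∃ x₁ x₂ x₃ x₄ x₅ x₆, IsDoubleHat2 (SimpleGraph.comap (fun j : Fin n => e.symm j) G)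
        a b c x₁ x₂ x₃ x₄ x₅ x₆) ↔
      (∃ x₁ x₂ x₃ x₄ x₅ x₆,
        IsDoubleHat2 G (e.symm a) (e.symm b) (e.symm c) x₁ x₂ x₃ x₄ x₅ x₆) := by
  constructor
  · rintro ⟨x₁, x₂, x₃, x₄, x₅, x₆, h⟩
    exact ⟨_, _, _, _, _, _, (dh_iff G e a b c x₁ x₂ x₃ x₄ x₅ x₆).mp h⟩
  · rintro ⟨x₁, x₂, x₃, x₄, x₅, x₆, h⟩
    refine ⟨e x₁, e x₂, e x₃, e x₄, e x₅, e x₆,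
      (dh_iff G e a b c (e x₁) (e x₂) (e x₃) (e x₄) (e x₅) (e x₆)).mpr ?_⟩
    simpa using h

lemma special_iff (a b c : Fin n) :
    SpecialBranch2 (SimpleGraph.comap (fun j : Fin n => e.symm j) G) a b c ↔
      SpecialBranch2 G (e.symm a) (e.symm b) (e.symm c) := by
  unfold SpecialBranch2
  rw [ear_iff G e, hat_ex_iff G e, dh_ex_iff G e]

lemma side2small_iff (a u : Fin n) :
    Side2Small (SimpleGraph.comap (fun j : Fin n => e.symm j) G) a u ↔
      Side2Small G (e.symm a) (e.symm u) := by
  unfold Side2Small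
  rw [nbG_eq G e u, nbG_eq G e a, ← Set.image_inter e.symm.injective]
  constructor
  · exact fun h => h.image _
  · intro h x hx y hy
    exact e.symm.injective (h (Set.mem_image_of_mem _ hx) (Set.mem_image_of_mem _ hy))

lemma side2branch_iff (a b u : Fin n) :
    Side2Branch (SimpleGraph.comap (fun j : Fin n => e.symm j) G) a b u ↔
      Side2Branch G (e.symm a) (e.symm b) (e.symm u) := by
  constructor
  · rintro ⟨w, hbw, hset, hsp⟩
    refine ⟨e.symm w, fun hh => hbw (e.symm.injective hh), ?_,
      (special_iff G e a u w).mp hsp⟩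
    rw [nbG_eq G e u, nbG_eq G e a, ← Set.image_inter e.symm.injective, hset]
    simp [Set.image_insert_eq]
  · rintro ⟨w, hbw, hset, hsp⟩
    refine ⟨e w, fun hh => hbw (by rw [hh]; simp), ?_, ?_⟩
    · apply Set.image_injective.mpr e.symm.injective
      rw [Set.image_inter e.symm.injective, ← nbG_eq G e u, ← nbG_eq G e a, hset]
      simp [Set.image_insert_eq]
    · have := (special_iff G e a u (e w))
      rw [this]
      simpa using hsp

lemma inH2_transfer (a b c : Fin n)
    (h : InH2 (SimpleGraph.comap (fun j : Fin n => e.symm j) G) a b c) :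
    InH2 G (e.symm a) (e.symm b) (e.symm c) := by
  obtain ⟨h1, h2, h3, h4, h5, h6⟩ := h
  refine ⟨h1, h2, h3, ?_, ?_, ?_⟩
  · rcases h4 with h | h
    · exact Or.inl ((side2small_iff G e a c).mp h)
    · exact Or.inr ((side2branch_iff G e a b c).mp h)
  · rcases h5 with h | h
    · exact Or.inl ((side2small_iff G e b c).mp h)
    · exact Or.inr ((side2branch_iff G e b a c).mp h)
  · rcases h6 with h | h
    · exact Or.inl ((side2branch_iff G e a b c).mp h)
    · exact Or.inr ((side2branch_iff G e b a c).mp h)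

lemma inT2_transfer (a b : Fin n)
    (h : InT2 (SimpleGraph.comap (fun j : Fin n => e.symm j) G) a b) :
    InT2 G (e.symm a) (e.symm b) := by
  obtain ⟨u, w, hne, su, sw⟩ := h
  exact ⟨e.symm u, e.symm w, fun hh => hne (e.symm.injective hh),
    (special_iff G e a b u).mp su, (special_iff G e a b w).mp sw⟩

end Transfer

lemma special_adj {V : Type*} {G : SimpleGraph V} {a b u : V}
    (h : SpecialBranch2 G a b u) : G.Adj a b := by
  rcases h with h | ⟨x, y, h⟩ | ⟨x₁, x₂, x₃, x₄, x₅, x₆, h⟩ <;> exact h.1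

end TwoTreeAux
namespace TwoTreeAux

lemma special_swap {V : Type*} {G : SimpleGraph V} {a b u : V}
    (h : SpecialBranch2 G a b u) : SpecialBranch2 G b a u := by
  rcases h with h | ⟨x, y, h⟩ | ⟨x₁, x₂, x₃, x₄, x₅, x₆, h⟩
  · exact Or.inl ⟨h.1.symm, by rw [h.2]; ext z; simp; tauto⟩
  · refine Or.inr (Or.inl ⟨y, x, h.1.symm, ?_, h.2.2.2, h.2.2.1⟩)
    rw [h.2.1]; ext z; simp; tauto
  · refine Or.inr (Or.inr ⟨x₂, x₁, x₆, x₅, x₄, x₃, h.1.symm, ?_, ?_, ?_,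
      h.2.2.2.2.2.2.2, h.2.2.2.2.2.2.1, h.2.2.2.2.2.1, h.2.2.2.2.1⟩)
    · rw [h.2.1]; ext z; simp; tauto
    · rw [h.2.2.2.1]; ext z; simp; tauto
    · rw [h.2.2.1]; ext z; simp; tauto

variable {n : ℕ} {H : SimpleGraph (Fin n)}

lemma lemmaA (hord : IsAdditionOrdering 2 H)
    (noT2 : ∀ x y u w : Fin n, u ≠ w → SpecialBranch2 H x y u → SpecialBranch2 H x y w → False)
    (noW : ∀ a b c : Fin n, InH2 H a b c → (∃ x y, IsHat2 H a b c x y) ∨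
      ∃ x₁ x₂ x₃ x₄ x₅ x₆, IsDoubleHat2 H a b c x₁ x₂ x₃ x₄ x₅ x₆) :
    ∀ i a b : Fin n, TTP H i a b → SpecialBranch2 H a b i := by
  suffices key : ∀ m : ℕ, ∀ i : Fin n, n ≤ i.val + m → ∀ a b : Fin n,
      TTP H i a b → SpecialBranch2 H a b i by
    intro i a b h; exact key n i (by omega) a b h
  intro m
  induction m with
  | zero => intro i hi; exact absurd i.isLt (by omega)
  | succ m IH =>
    intro i hi a b hT
    have IH' : ∀ j : Fin n, i < j → ∀ c d : Fin n, TTP H j c d → SpecialBranch2 H c d j := by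
      intro j hj c d h
      refine IH j ?_ c d h
      rw [Fin.lt_def] at hj; omega
    have sideSpec : ∀ a' b' : Fin n, TTP H i a' b' → ∀ w, H.Adj w i → H.Adj w a' → w ≠ b' →
        i < w ∧ SpecialBranch2 H a' i w := by
      intro a' b' hT' w hwi hwa hwb
      have hwa' : w ≠ a' := (H.ne_of_adj hwa)
      have hwi' : w ≠ i := H.ne_of_adj hwi
      rcases lt_trichotomy w i with h | h | h
      · rcases hT'.2.2.2.2.2.2 w h hwi.symm with h2 | h2
        · exact absurd h2 hwa'
        · exact absurd h2 hwb
      · exact absurd h hwi'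
      · have hWval : 2 ≤ w.val := by
          have := val_ge_two hT'
          rw [Fin.lt_def] at h; omega
        have hTw : TTP H w a' i :=
          ttp_of_two hord hWval (lt_trans hT'.2.1 h) h (ne_of_lt hT'.2.1) hwa hwi
            hT'.2.2.2.1.symm
        exact ⟨h, IH' w h a' i hTw⟩
    have half : ∀ a' b' : Fin n, TTP H i a' b' →
        (∃ w, H.Adj w i ∧ H.Adj w a' ∧ w ≠ b') → SpecialBranch2 H a' b' i := by
      rintro a' b' hT' ⟨u, hu1, hu2, hu3⟩
      obtain ⟨hiu, hspu⟩ := sideSpec a' b' hT' u hu1 hu2 hu3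
      have uniq : ∀ w, H.Adj w i → H.Adj w a' → w ≠ b' → w = u := by
        intro w h1 h2 h3
        by_contra hne
        obtain ⟨hiw, hspw⟩ := sideSpec a' b' hT' w h1 h2 h3
        exact noT2 a' i w u hne hspw hspu
      have hsetA : H.neighborSet i ∩ H.neighborSet a' = {b', u} := by
        ext w
        simp only [Set.mem_inter_iff, SimpleGraph.mem_neighborSet, Set.mem_insert_iff,
          Set.mem_singleton_iff]
        constructor
        · rintro ⟨h1, h2⟩
          by_cases hb : w = b'
          · exact Or.inl hb
          · exact Or.inr (uniq w h1.symm h2.symm hb)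
        · rintro (rfl | rfl)
          · exact ⟨hT'.2.2.2.2.1, hT'.2.2.2.2.2.1⟩
          · exact ⟨hu1.symm, hu2.symm⟩
      have hbu : b' ≠ u := ne_of_lt (lt_trans hT'.2.2.1 hiu)
      have sideA : Side2Branch H a' b' i := ⟨u, hbu, hsetA, hspu⟩
      have sideBor : Side2Small H b' i ∨ Side2Branch H b' a' i := by
        by_cases hB : ∃ w, H.Adj w i ∧ H.Adj w b' ∧ w ≠ a'
        · obtain ⟨u', h1, h2, h3⟩ := hB
          obtain ⟨hiu', hspu'⟩ := sideSpec b' a' (ttp_swap hT') u' h1 h2 h3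
          have uniq' : ∀ w, H.Adj w i → H.Adj w b' → w ≠ a' → w = u' := by
            intro w hh1 hh2 hh3
            by_contra hne
            obtain ⟨hiw, hspw⟩ := sideSpec b' a' (ttp_swap hT') w hh1 hh2 hh3
            exact noT2 b' i w u' hne hspw hspu'
          right
          refine ⟨u', ne_of_lt (lt_trans hT'.2.1 hiu'), ?_, hspu'⟩
          ext w
          simp only [Set.mem_inter_iff, SimpleGraph.mem_neighborSet, Set.mem_insert_iff,
            Set.mem_singleton_iff]
          constructor
          · rintro ⟨hh1, hh2⟩
            by_cases ha : w = a'
            · exact Or.inl ha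
            · exact Or.inr (uniq' w hh1.symm hh2.symm ha)
          · rintro (rfl | rfl)
            · exact ⟨hT'.2.2.2.1, hT'.2.2.2.2.2.1.symm⟩
            · exact ⟨h1.symm, h2.symm⟩
        · left
          intro x hx y hy
          simp only [Set.mem_inter_iff, SimpleGraph.mem_neighborSet] at hx hy
          have hxa : x = a' := by
            by_contra h; exact hB ⟨x, hx.1.symm, hx.2.symm, h⟩
          have hya : y = a' := by
            by_contra h; exact hB ⟨y, hy.1.symm, hy.2.symm, h⟩
          rw [hxa, hya]
      have hIn : InH2 H a' b' i :=
        ⟨hT'.2.2.2.2.2.1, hT'.2.2.2.1.symm, hT'.2.2.2.2.1.symm, Or.inr sideA, sideBor,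
          Or.inl sideA⟩
      rcases noW a' b' i hIn with h | h
      · exact Or.inr (Or.inl h)
      · exact Or.inr (Or.inr h)
    by_cases hA : ∃ w, H.Adj w i ∧ H.Adj w a ∧ w ≠ b
    · exact half a b hT hA
    · by_cases hB : ∃ w, H.Adj w i ∧ H.Adj w b ∧ w ≠ a
      · exact special_swap (half b a (ttp_swap hT) hB)
      · left
        refine ⟨hT.2.2.2.2.2.1, ?_⟩
        have claim : ∀ k : ℕ, ∀ w : Fin n, w.val = k → H.Adj i w → w = a ∨ w = b := by
          intro k
          induction k using Nat.strong_induction_on with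
          | _ k IHk =>
            intro w hk hw
            rcases lt_trichotomy w i with h | h | h
            · exact hT.2.2.2.2.2.2 w h hw
            · exact absurd h (fun hh => H.ne_of_adj hw hh.symm)
            · have hWval : 2 ≤ w.val := by
                have := val_ge_two hT
                rw [Fin.lt_def] at h; omega
              obtain ⟨c, d, hc⟩ := parents_exist hord hWval
              have hio : i = c ∨ i = d := hc.2.2.2.2.2.2 i h hw.symm
              have hkey : ∃ o : Fin n, o < w ∧ H.Adj w o ∧ H.Adj i o := by
                rcases hio with h2 | h2
                · exact ⟨d, hc.2.2.1, hc.2.2.2.2.1, h2 ▸ hc.2.2.2.2.2.1⟩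
                · exact ⟨c, hc.2.1, hc.2.2.2.1, (h2 ▸ hc.2.2.2.2.2.1).symm⟩
              obtain ⟨o, how, hwo, hio'⟩ := hkey
              have hov : o.val < k := by rw [Fin.lt_def] at how; omega
              rcases IHk o.val hov o rfl hio' with rfl | rfl
              · exact absurd ⟨w, hw.symm, hwo, ne_of_gt (lt_trans hT.2.2.1 h)⟩ hA
              · exact absurd ⟨w, hw.symm, hwo, ne_of_gt (lt_trans hT.2.1 h)⟩ hB
        ext w
        simp only [SimpleGraph.mem_neighborSet, Set.mem_insert_iff, Set.mem_singleton_iff]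
        constructor
        · exact fun h => claim w.val w rfl h
        · rintro (rfl | rfl)
          · exact hT.2.2.2.1
          · exact hT.2.2.2.2.1

end TwoTreeAux
namespace TwoTreeAux

variable {n : ℕ} {H : SimpleGraph (Fin n)}

lemma endgame (v0 v1 v2 : Fin n)
    (n01 : v0 ≠ v1) (n02 : v0 ≠ v2) (n12 : v1 ≠ v2)
    (A01 : H.Adj v0 v1) (A02 : H.Adj v0 v2) (A12 : H.Adj v1 v2)
    (hC : ∀ w, H.Adj v0 w → H.Adj v1 w → w = v2)
    (isoTri : H.neighborSet v0 = {v1, v2} → H.neighborSet v1 = {v0, v2} →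
      H.neighborSet v2 = {v0, v1} → False)
    (earFalse : H.neighborSet v2 = {v0, v1} → False)
    (S2 : SpecialBranch2 H v0 v1 v2)
    (noW : ∀ a b c : Fin n, InH2 H a b c → (∃ x y, IsHat2 H a b c x y) ∨
      ∃ x₁ x₂ x₃ x₄ x₅ x₆, IsDoubleHat2 H a b c x₁ x₂ x₃ x₄ x₅ x₆) : False := by
  rcases S2 with hEar | ⟨x, y, hH⟩ | ⟨u1, u2, u3, u4, u5, u6, hD⟩
  · exact earFalse hEar.2
  · -- hat case
    obtain ⟨-, hN2, hNx, hNy⟩ := hH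
    have Axv0 : H.Adj x v0 := adj_of_nb hNx (by simp)
    have Axv2 : H.Adj x v2 := adj_of_nb hNx (by simp)
    have Ayv1 : H.Adj y v1 := adj_of_nb hNy (by simp)
    have Ayv2 : H.Adj y v2 := adj_of_nb hNy (by simp)
    have hyne0 : y ≠ v0 := by
      intro h; obtain rfl := h.symm
      have hx := mem_of_nb hNy Axv0.symm
      simp only [Set.mem_insert_iff, Set.mem_singleton_iff] at hx
      rcases hx with h | h
      · -- x = v1
        obtain rfl := h.symm
        have hv2 : H.neighborSet v2 = {v0, v1} := by
          rw [hN2]; ext z; simp; tauto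
        exact isoTri hNy hNx hv2
      · obtain rfl := h.symm
        exact H.irrefl Axv2
    have hxne1 : x ≠ v1 := by
      intro h; obtain rfl := h.symm
      have hy := mem_of_nb hNx Ayv1.symm
      simp only [Set.mem_insert_iff, Set.mem_singleton_iff] at hy
      rcases hy with h | h
      · exact hyne0 h
      · obtain rfl := h.symm
        exact H.irrefl Ayv2
    have hset12 : H.neighborSet v1 ∩ H.neighborSet v2 = {v0, y} := by
      ext w
      simp only [Set.mem_inter_iff, SimpleGraph.mem_neighborSet, Set.mem_insert_iff,
        Set.mem_singleton_iff]
      constructor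
      · rintro ⟨h1w, h2w⟩
        have hmem := mem_of_nb hN2 h2w
        simp only [Set.mem_insert_iff, Set.mem_singleton_iff] at hmem
        rcases hmem with h | h | h | h
        · exact Or.inl h
        · obtain rfl := h.symm
          exact absurd h1w (H.irrefl)
        · obtain rfl := h.symm
          have := mem_of_nb hNx h1w.symm
          simp only [Set.mem_insert_iff, Set.mem_singleton_iff] at this
          rcases this with h | h
          · exact absurd h.symm n01
          · exact absurd h n12
        · exact Or.inr h
      · rintro (rfl | rfl)
        · exact ⟨A01.symm, A02.symm⟩
        · exact ⟨Ayv1.symm, Ayv2.symm⟩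
    have sideBranch : Side2Branch H v2 v0 v1 := by
      refine ⟨y, hyne0.symm, hset12, Or.inl ⟨A12.symm, ?_⟩⟩
      rw [hNy]; ext z; simp; tauto
    have sideSmall : Side2Small H v0 v1 := by
      intro p hp q hq
      simp only [Set.mem_inter_iff, SimpleGraph.mem_neighborSet] at hp hq
      rw [hC p hp.2 hp.1, hC q hq.2 hq.1]
    have hIn : InH2 H v2 v0 v1 :=
      ⟨A02.symm, A12.symm, A01, Or.inr sideBranch, Or.inl sideSmall, Or.inl sideBranch⟩
    rcases noW v2 v0 v1 hIn with ⟨x', y', hh⟩ | ⟨x₁, x₂, x₃, x₄, x₅, x₆, hh⟩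
    · -- hat at (v2, v0, v1)
      obtain ⟨-, hh1, hh2, hh3⟩ := hh
      have hy' : y' = v2 :=
        hC y' (adj_of_nb hh3 (by simp)).symm (adj_of_nb hh3 (by simp)).symm
      obtain rfl := hy'.symm
      -- hh3 : N v2 = {v0, v1}
      have hx := mem_of_nb hh3 Axv2.symm
      simp only [Set.mem_insert_iff, Set.mem_singleton_iff] at hx
      rcases hx with h | h
      · obtain rfl := h.symm
        exact H.irrefl Axv0
      · exact hxne1 h
    · -- double hat at (v2, v0, v1)
      obtain ⟨-, hh1, hh2, hh3, hh4, hh5, hh6, hh7⟩ := hh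
      -- hh1 : N v1 = {v2,v0,x₁,x₂,x₄,x₅}, hh2 : N x₁ = {v2,v1,x₃,x₄},
      -- hh3 : N x₂ = {v0,v1,x₅,x₆}, hh4 : N x₃ = {v2,x₁}, hh5 : N x₄ = {v1,x₁},
      -- hh6 : N x₅ = {v1,x₂}, hh7 : N x₆ = {v0,x₂}
      have hx2 : x₂ = v2 :=
        hC x₂ (adj_of_nb hh3 (by simp)).symm (adj_of_nb hh3 (by simp)).symm
      obtain rfl := hx2.symm
      -- x₅ analysis : N x₅ = {v1, v2}
      have hx5m := mem_of_nb hN2 (adj_of_nb hh6 (by simp)).symm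
      simp only [Set.mem_insert_iff, Set.mem_singleton_iff] at hx5m
      rcases hx5m with h | h | h | h
      · -- x₅ = v0
        obtain rfl := h.symm
        have hx := mem_of_nb hh6 Axv0.symm
        simp only [Set.mem_insert_iff, Set.mem_singleton_iff] at hx
        rcases hx with h | h
        · exact hxne1 h
        · obtain rfl := h.symm
          exact H.irrefl Axv2
      · -- x₅ = v1
        obtain rfl := h.symm
        exact H.irrefl (adj_of_nb hh6 (by simp))
      · -- x₅ = x
        obtain rfl := h.symm
        have hmm : ({v0, v2} : Set (Fin n)) = {v1, v2} := hNx.symm.trans hh6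
        have : (v0 : Fin n) ∈ ({v1, v2} : Set (Fin n)) := by rw [← hmm]; simp
        simp only [Set.mem_insert_iff, Set.mem_singleton_iff] at this
        rcases this with h | h
        · exact n01 h
        · exact n02 h
      · -- x₅ = y : proceed
        obtain rfl := h.symm
        have hx1m := mem_of_nb hN2 (adj_of_nb hh2 (by simp)).symm
        simp only [Set.mem_insert_iff, Set.mem_singleton_iff] at hx1m
        rcases hx1m with h | h | h | h
        · -- x₁ = v0
          obtain rfl := h.symm
          -- hh2 : N v0 = {v2,v1,x₃,x₄}, hh5 : N x₄ = {v1, v0}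
          have hx4 : x₄ = v2 :=
            hC x₄ (adj_of_nb hh5 (by simp)).symm (adj_of_nb hh5 (by simp)).symm
          obtain rfl := hx4.symm
          -- hh5 : N v2 = {v1, v0}
          have hx := mem_of_nb hh5 Axv2.symm
          simp only [Set.mem_insert_iff, Set.mem_singleton_iff] at hx
          rcases hx with h | h
          · exact hxne1 h
          · obtain rfl := h.symm
            exact H.irrefl Axv0
        · -- x₁ = v1
          obtain rfl := h.symm
          exact H.irrefl (adj_of_nb hh2 (by simp))
        · -- x₁ = x
          obtain rfl := h.symm
          have : (v1 : Fin n) ∈ ({v0, v2} : Set (Fin n)) :=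
            mem_of_nb hNx (adj_of_nb hh2 (by simp))
          simp only [Set.mem_insert_iff, Set.mem_singleton_iff] at this
          rcases this with h | h
          · exact n01 h.symm
          · exact n12 h
        · -- x₁ = y
          obtain rfl := h.symm
          -- hh2 : N y = {v2,v1,x₃,x₄} vs hNy : N y = {v1,v2}
          have hx3m : x₃ ∈ ({v1, v2} : Set (Fin n)) :=
            mem_of_nb hNy (adj_of_nb hh2 (by simp))
          simp only [Set.mem_insert_iff, Set.mem_singleton_iff] at hx3m
          rcases hx3m with h | h
          · -- x₃ = v1 : hh4 : N v1 = {v2, y}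
            obtain rfl := h.symm
            have := mem_of_nb hh4 A01.symm
            simp only [Set.mem_insert_iff, Set.mem_singleton_iff] at this
            rcases this with h | h
            · exact n02 h
            · exact hyne0 h.symm
          · -- x₃ = v2
            obtain rfl := h.symm
            exact H.irrefl (adj_of_nb hh4 (by simp))
  · -- double hat case
    obtain ⟨-, hN2, hNu1, hNu2, hNu3, hNu4, hNu5, hNu6⟩ := hD
    have A2u1 : H.Adj v2 u1 := adj_of_nb hN2 (by simp)
    have Au1v0 : H.Adj u1 v0 := adj_of_nb hNu1 (by simp)
    have Au1v2 : H.Adj u1 v2 := adj_of_nb hNu1 (by simp)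
    have Au2v1 : H.Adj u2 v1 := adj_of_nb hNu2 (by simp)
    have Au2v2 : H.Adj u2 v2 := adj_of_nb hNu2 (by simp)
    have c1 : u1 ≠ v1 := by
      intro h; obtain rfl := h.symm
      -- hNu1 : N v1 = {v0,v2,u3,u4}; hNu3 : N u3 = {v0, v1}
      have h3 : u3 = v2 :=
        hC u3 (adj_of_nb hNu3 (by simp)).symm (adj_of_nb hNu3 (by simp)).symm
      obtain rfl := h3.symm
      -- hNu3 : N v2 = {v0, v1}
      have h5 := mem_of_nb hNu3 (adj_of_nb hN2 (by simp) : H.Adj v2 u5)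
      simp only [Set.mem_insert_iff, Set.mem_singleton_iff] at h5
      rcases h5 with h | h
      · -- u5 = v0
        obtain rfl := h.symm
        have := mem_of_nb hNu5 A01
        simp only [Set.mem_insert_iff, Set.mem_singleton_iff] at this
        rcases this with h | h
        · exact n12 h
        · obtain rfl := h
          exact H.irrefl Au2v1
      · -- u5 = v1
        obtain rfl := h.symm
        have := mem_of_nb hNu5 A01.symm
        simp only [Set.mem_insert_iff, Set.mem_singleton_iff] at this
        rcases this with h | h
        · exact n02 h
        · obtain rfl := h
          have h6 : u6 = v2 :=
            hC u6 (adj_of_nb hNu6 (by simp)).symm (adj_of_nb hNu6 (by simp)).symm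
          obtain rfl := h6.symm
          refine isoTri ?_ ?_ ?_
          · rw [hNu2]; ext z; simp; try tauto
          · rw [hNu5]; ext z; simp; try tauto
          · rw [hNu6]; ext z; simp; try tauto
    have c0 : u2 ≠ v0 := by
      intro h; obtain rfl := h.symm
      -- hNu2 : N v0 = {v1,v2,u5,u6}; hNu6 : N u6 = {v1, v0}
      have h6 : u6 = v2 :=
        hC u6 (adj_of_nb hNu6 (by simp)).symm (adj_of_nb hNu6 (by simp)).symm
      obtain rfl := h6.symm
      have := mem_of_nb hNu6 A2u1
      simp only [Set.mem_insert_iff, Set.mem_singleton_iff] at this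
      rcases this with h | h
      · exact c1 h
      · obtain rfl := h.symm
        exact H.irrefl Au1v0
    have c2 : H.neighborSet v0 ∩ H.neighborSet v2 = {v1, u1} := by
      ext w
      simp only [Set.mem_inter_iff, SimpleGraph.mem_neighborSet, Set.mem_insert_iff,
        Set.mem_singleton_iff]
      constructor
      · rintro ⟨h0w, h2w⟩
        have hm := mem_of_nb hN2 h2w
        simp only [Set.mem_insert_iff, Set.mem_singleton_iff] at hm
        rcases hm with h | h | h | h | h | h
        · obtain rfl := h.symm
          exact absurd h0w H.irrefl
        · exact Or.inl h
        · exact Or.inr h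
        · -- w = u2
          obtain rfl := h.symm
          have := mem_of_nb hNu2 h0w.symm
          simp only [Set.mem_insert_iff, Set.mem_singleton_iff] at this
          rcases this with h | h | h | h
          · exact absurd h n01
          · exact absurd h n02
          · obtain rfl := h
            -- hNu5 : N v0 = {v2, u2}
            have := mem_of_nb hNu5 A01
            simp only [Set.mem_insert_iff, Set.mem_singleton_iff] at this
            rcases this with h | h
            · exact absurd h n12
            · obtain rfl := h
              exact absurd Au2v1 H.irrefl
          · obtain rfl := h
            -- hNu6 : N v0 = {v1, u2}
            have := mem_of_nb hNu6 A02
            simp only [Set.mem_insert_iff, Set.mem_singleton_iff] at this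
            rcases this with h | h
            · exact absurd h.symm n12
            · obtain rfl := h
              exact absurd Au2v2 H.irrefl
        · -- w = u4
          obtain rfl := h.symm
          have := mem_of_nb hNu4 h0w.symm
          simp only [Set.mem_insert_iff, Set.mem_singleton_iff] at this
          rcases this with h | h
          · exact absurd h n02
          · obtain rfl := h
            exact absurd Au1v0 H.irrefl
        · -- w = u5
          obtain rfl := h.symm
          have := mem_of_nb hNu5 h0w.symm
          simp only [Set.mem_insert_iff, Set.mem_singleton_iff] at this
          rcases this with h | h
          · exact absurd h n02
          · exact absurd h.symm c0
      · rintro (rfl | rfl)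
        · exact ⟨A01, adj_of_nb hN2 (by simp)⟩
        · exact ⟨Au1v0.symm, A2u1⟩
    have sideBranch : Side2Branch H v2 v1 v0 := by
      refine ⟨u1, fun h => c1 h.symm, c2, Or.inr (Or.inl ⟨u4, u3, A02.symm, ?_, hNu4, hNu3⟩)⟩
      rw [hNu1]; ext z; simp; tauto
    have sideSmall : Side2Small H v1 v0 := by
      intro p hp q hq
      simp only [Set.mem_inter_iff, SimpleGraph.mem_neighborSet] at hp hq
      rw [hC p hp.1 hp.2, hC q hq.1 hq.2]
    have hIn : InH2 H v2 v1 v0 :=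
      ⟨A12.symm, A02.symm, A01.symm, Or.inr sideBranch, Or.inl sideSmall, Or.inl sideBranch⟩
    rcases noW v2 v1 v0 hIn with ⟨x', y', hh⟩ | ⟨x₁, x₂, x₃, x₄, x₅, x₆, hh⟩
    · -- hat at (v2, v1, v0)
      obtain ⟨-, hh1, hh2, hh3⟩ := hh
      have hy' : y' = v2 :=
        hC y' (adj_of_nb hh3 (by simp)).symm (adj_of_nb hh3 (by simp)).symm
      obtain rfl := hy'.symm
      -- hh3 : N v2 = {v1, v0}
      have := mem_of_nb hh3 A2u1
      simp only [Set.mem_insert_iff, Set.mem_singleton_iff] at this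
      rcases this with h | h
      · exact c1 h
      · obtain rfl := h.symm
        exact H.irrefl Au1v0
    · -- double hat at (v2, v1, v0)
      obtain ⟨-, hh1, hh2, hh3, hh4, hh5, hh6, hh7⟩ := hh
      -- hh3 : N x₂ = {v1, v0, x₅, x₆}
      have hx2 : x₂ = v2 :=
        hC x₂ (adj_of_nb hh3 (by simp)).symm (adj_of_nb hh3 (by simp)).symm
      obtain rfl := hx2.symm
      -- hh6 : N x₅ = {v0, v2}
      have hx5m := mem_of_nb hN2 (adj_of_nb hh6 (by simp)).symm
      simp only [Set.mem_insert_iff, Set.mem_singleton_iff] at hx5m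
      rcases hx5m with h | h | h | h | h | h
      · -- x₅ = v0
        obtain rfl := h.symm
        exact H.irrefl (adj_of_nb hh6 (by simp))
      · -- x₅ = v1
        obtain rfl := h.symm
        -- hh6 : N v1 = {v0, v2}
        have := mem_of_nb hh6 (adj_of_nb hNu6 (by simp)).symm
        simp only [Set.mem_insert_iff, Set.mem_singleton_iff] at this
        rcases this with h | h
        · -- u6 = v0
          obtain rfl := h.symm
          -- hNu6 : N v0 = {v1, u2}
          have := mem_of_nb hNu6 A02
          simp only [Set.mem_insert_iff, Set.mem_singleton_iff] at this
          rcases this with h | h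
          · exact n12 h.symm
          · obtain rfl := h
            exact H.irrefl Au2v2
        · -- u6 = v2
          obtain rfl := h.symm
          -- hNu6 : N v2 = {v1, u2}
          have := mem_of_nb hNu6 A2u1
          simp only [Set.mem_insert_iff, Set.mem_singleton_iff] at this
          rcases this with h | h
          · exact c1 h
          · -- u1 = u2
            obtain rfl := h
            -- hNu2 : N u1 = {v1, v2, u5, v2}
            have := mem_of_nb hNu2 Au1v0
            simp only [Set.mem_insert_iff, Set.mem_singleton_iff] at this
            rcases this with h | h | h | h
            · exact n01 h
            · exact n02 h
            · obtain rfl := h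
              -- hNu5 : N v0 = {v2, u1}
              have := mem_of_nb hNu5 A01
              simp only [Set.mem_insert_iff, Set.mem_singleton_iff] at this
              rcases this with h | h
              · exact n12 h
              · exact c1 h.symm
            · exact n02 h
      · -- x₅ = u1
        obtain rfl := h.symm
        -- hh6 : N u1 = {v0, v2}, hNu1 : N u1 = {v0,v2,u3,u4}
        have := mem_of_nb hh6 (adj_of_nb hNu1 (by simp) : H.Adj u1 u3)
        simp only [Set.mem_insert_iff, Set.mem_singleton_iff] at this
        rcases this with h | h
        · obtain rfl := h.symm
          exact H.irrefl (adj_of_nb hNu3 (by simp))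
        · obtain rfl := h.symm
          -- hNu3 : N v2 = {v0, u1}
          have := mem_of_nb hNu3 A12.symm
          simp only [Set.mem_insert_iff, Set.mem_singleton_iff] at this
          rcases this with h | h
          · exact n01 h.symm
          · exact c1 h.symm
      · -- x₅ = u2
        obtain rfl := h.symm
        -- hh6 : N u2 = {v0, v2}
        have := mem_of_nb hh6 Au2v1
        simp only [Set.mem_insert_iff, Set.mem_singleton_iff] at this
        rcases this with h | h
        · exact n01 h.symm
        · exact n12 h
      · -- x₅ = u4
        obtain rfl := h.symm
        -- hh6 : N u4 = {v0, v2}, hNu4 : N u4 = {v2, u1}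
        have := mem_of_nb hNu4 (adj_of_nb hh6 (by simp) : H.Adj u4 v0)
        simp only [Set.mem_insert_iff, Set.mem_singleton_iff] at this
        rcases this with h | h
        · exact n02 h
        · obtain rfl := h
          exact H.irrefl Au1v0
      · -- x₅ = u5
        obtain rfl := h.symm
        -- hh6 : N u5 = {v0, v2}, hNu5 : N u5 = {v2, u2}
        have := mem_of_nb hNu5 (adj_of_nb hh6 (by simp) : H.Adj u5 v0)
        simp only [Set.mem_insert_iff, Set.mem_singleton_iff] at this
        rcases this with h | h
        · exact n02 h
        · exact c0 h.symm

end TwoTreeAux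
namespace TwoTreeAux

lemma mainH {n : ℕ} {H : SimpleGraph (Fin n)} (hord : IsAdditionOrdering 2 H) (hn : 4 ≤ n)
    (noT2 : ∀ x y u w : Fin n, u ≠ w → SpecialBranch2 H x y u → SpecialBranch2 H x y w → False)
    (noW : ∀ a b c : Fin n, InH2 H a b c → (∃ x y, IsHat2 H a b c x y) ∨
      ∃ x₁ x₂ x₃ x₄ x₅ x₆, IsDoubleHat2 H a b c x₁ x₂ x₃ x₄ x₅ x₆) : False := by
  obtain ⟨v0, v1, v2, v3, hv0, hv1, hv2, hv3⟩ :
      ∃ a b c d : Fin n, a.val = 0 ∧ b.val = 1 ∧ c.val = 2 ∧ d.val = 3 :=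
    ⟨⟨0, by omega⟩, ⟨1, by omega⟩, ⟨2, by omega⟩, ⟨3, by omega⟩, rfl, rfl, rfl, rfl⟩
  have n01 : v0 ≠ v1 := by rw [Ne, Fin.ext_iff, hv0, hv1]; omega
  have n02 : v0 ≠ v2 := by rw [Ne, Fin.ext_iff, hv0, hv2]; omega
  have n12 : v1 ≠ v2 := by rw [Ne, Fin.ext_iff, hv1, hv2]; omega
  have A01 : H.Adj v0 v1 := hord.1 v0 v1 (by omega) (by omega) n01
  have A02 : H.Adj v0 v2 := hord.1 v0 v2 (by omega) (by omega) n02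
  have A12 : H.Adj v1 v2 := hord.1 v1 v2 (by omega) (by omega) n12
  have hT2 : TTP H v2 v0 v1 := by
    refine ⟨n01, by rw [Fin.lt_def, hv0, hv2]; omega, by rw [Fin.lt_def, hv1, hv2]; omega,
      A02.symm, A12.symm, A01, ?_⟩
    intro j hj _
    rw [Fin.lt_def, hv2] at hj
    have : j.val = 0 ∨ j.val = 1 := by omega
    rcases this with h | h
    · exact Or.inl (Fin.ext (by omega))
    · exact Or.inr (Fin.ext (by omega))
  have S2 : SpecialBranch2 H v0 v1 v2 := lemmaA hord noT2 noW v2 v0 v1 hT2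
  have hC : ∀ w, H.Adj v0 w → H.Adj v1 w → w = v2 := by
    intro w hw0 hw1
    by_contra hne
    have hnw0 : w ≠ v0 := fun h => H.irrefl (h ▸ hw0)
    have hnw1 : w ≠ v1 := fun h => H.irrefl (h ▸ hw1)
    have hwval : 2 ≤ w.val := by
      have e0 : w.val ≠ 0 := fun h => hnw0 (Fin.ext (by omega))
      have e1 : w.val ≠ 1 := fun h => hnw1 (Fin.ext (by omega))
      omega
    have hTw : TTP H w v0 v1 := ttp_of_two hord hwval
      (by rw [Fin.lt_def, hv0]; omega) (by rw [Fin.lt_def, hv1]; omega) n01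
      hw0.symm hw1.symm A01
    exact noT2 v0 v1 w v2 hne (lemmaA hord noT2 noW w v0 v1 hTw) S2
  obtain ⟨c, d, hcd⟩ := parents_exist hord (show 2 ≤ v3.val by omega)
  have tri : ∀ p : Fin n, p < v3 → p = v0 ∨ p = v1 ∨ p = v2 := by
    intro p hp
    rw [Fin.lt_def, hv3] at hp
    have : p.val = 0 ∨ p.val = 1 ∨ p.val = 2 := by omega
    rcases this with h | h | h
    · exact Or.inl (Fin.ext (by omega))
    · exact Or.inr (Or.inl (Fin.ext (by omega)))
    · exact Or.inr (Or.inr (Fin.ext (by omega)))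
  have v3ne : ∀ q : Fin n, q = v0 ∨ q = v1 ∨ q = v2 → v3 = q → False := by
    rintro q (rfl | rfl | rfl) h <;> · rw [Fin.ext_iff] at h; omega
  have isoTri : H.neighborSet v0 = {v1, v2} → H.neighborSet v1 = {v0, v2} →
      H.neighborSet v2 = {v0, v1} → False := by
    intro hA hB hCC
    have hadj : H.Adj c v3 := hcd.2.2.2.1.symm
    rcases tri c hcd.2.1 with h | h | h
    · obtain rfl := h.symm
      have := mem_of_nb hA hadj
      simp only [Set.mem_insert_iff, Set.mem_singleton_iff] at this
      rcases this with h | h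
      · exact v3ne v1 (Or.inr (Or.inl rfl)) h
      · exact v3ne v2 (Or.inr (Or.inr rfl)) h
    · obtain rfl := h.symm
      have := mem_of_nb hB hadj
      simp only [Set.mem_insert_iff, Set.mem_singleton_iff] at this
      rcases this with h | h
      · exact v3ne v0 (Or.inl rfl) h
      · exact v3ne v2 (Or.inr (Or.inr rfl)) h
    · obtain rfl := h.symm
      have := mem_of_nb hCC hadj
      simp only [Set.mem_insert_iff, Set.mem_singleton_iff] at this
      rcases this with h | h
      · exact v3ne v0 (Or.inl rfl) h
      · exact v3ne v1 (Or.inr (Or.inl rfl)) h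
  have earFalse : H.neighborSet v2 = {v0, v1} → False := by
    intro hE
    have getp : ∀ p : Fin n, p < v3 → H.Adj v3 p → p = v0 ∨ p = v1 := by
      intro p hp hadj
      rcases tri p hp with h | h | h
      · exact Or.inl h
      · exact Or.inr h
      · obtain rfl := h.symm
        have := mem_of_nb hE hadj.symm
        simp only [Set.mem_insert_iff, Set.mem_singleton_iff] at this
        rcases this with h | h
        · exact absurd h (fun hh => v3ne v0 (Or.inl rfl) hh)
        · exact absurd h (fun hh => v3ne v1 (Or.inr (Or.inl rfl)) hh)
    have h1 := getp c hcd.2.1 hcd.2.2.2.1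
    have h2 := getp d hcd.2.2.1 hcd.2.2.2.2.1
    have hcd1 := hcd.1
    have hadjc := hcd.2.2.2.1
    have hadjd := hcd.2.2.2.2.1
    rcases h1 with h | h <;> obtain rfl := h.symm <;> rcases h2 with h | h <;>
      obtain rfl := h.symm
    · exact hcd1 rfl
    · exact v3ne v2 (Or.inr (Or.inr rfl)) (hC v3 hadjc.symm hadjd.symm)
    · exact v3ne v2 (Or.inr (Or.inr rfl)) (hC v3 hadjd.symm hadjc.symm)
    · exact hcd1 rfl
  exact endgame v0 v1 v2 n01 n02 n12 A01 A02 A12 hC isoTri earFalse S2 noW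

end TwoTreeAux

/-- Every 2-tree of order at least 4 contains a configuration in
`𝓗⁽²⁾(G) ∪ 𝓣⁽²⁾(G)` that is neither a hat nor a double hat of `G`. -/
theorem two_tree_unavoidable {V : Type*} [Fintype V] (G : SimpleGraph V)
    (hG : IsKTree 2 G) (hcard : 4 ≤ Fintype.card V) :
    (∃ v₁ v₂ u₀ : V, InH2 G v₁ v₂ u₀ ∧
      ¬ (∃ x y, IsHat2 G v₁ v₂ u₀ x y) ∧
      ¬ (∃ x₁ x₂ x₃ x₄ x₅ x₆, IsDoubleHat2 G v₁ v₂ u₀ x₁ x₂ x₃ x₄ x₅ x₆)) ∨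
    (∃ v₁ v₂ : V, G.Adj v₁ v₂ ∧ InT2 G v₁ v₂) := by
  obtain ⟨hc3, e, hord⟩ := hG
  by_contra hcon
  rw [not_or] at hcon
  obtain ⟨hL, hR⟩ := hcon
  refine TwoTreeAux.mainH hord hcard ?_ ?_
  · intro x y u w hne hsu hsw
    exact hR ⟨e.symm x, e.symm y,
      TwoTreeAux.special_adj ((TwoTreeAux.special_iff G e x y u).mp hsu),
      TwoTreeAux.inT2_transfer G e x y ⟨u, w, hne, hsu, hsw⟩⟩
  · intro a b c hIn
    by_contra hnot
    rw [not_or] at hnot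
    exact hL ⟨e.symm a, e.symm b, e.symm c, TwoTreeAux.inH2_transfer G e a b c hIn,
      fun hex => hnot.1 ((TwoTreeAux.hat_ex_iff G e a b c).mpr hex),
      fun hex => hnot.2 ((TwoTreeAux.dh_ex_iff G e a b c).mpr hex)⟩
end
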